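/- arXiv:1309.0903 — 5 statements merged into one kernel-verified Lean document; each statement's English description precedes it below -/
import Mathlib

section
/- Let w₀,…,w₄ be positive integer weights and let F ∈ ℂ[x₀,…,x₄] be weighted homogeneous of degree d with respect to (w₀,…,w₄) and quasi-smooth (its partial derivatives vanish simultaneously only at the origin). Then for every index i with wᵢ < d, the polynomial obtained from F by substituting xᵢ = 0 is a nonzero irreducible polynomial in the remaining four variables. -/
open MvPolynomial Finset

namespace QSAux

variable {σ : Type*}

/-- decomposition of a polynomial as sum of its weighted homogeneous components,
over the finset of weights of its support -/
lemma sum_comp (w : σ → ℕ) (P : MvPolynomial σ ℂ) :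
    ∑ m ∈ P.support.image (Finsupp.weight w), weightedHomogeneousComponent w m P = P := by
  classical
  ext μ
  rw [MvPolynomial.coeff_sum]
  simp only [coeff_weightedHomogeneousComponent]
  by_cases h : MvPolynomial.coeff μ P = 0
  · rw [h]
    exact Finset.sum_eq_zero (fun m _ => by split <;> simp [h])
  · rw [Finset.sum_eq_single (Finsupp.weight w μ)]
    · rw [if_pos rfl]
    · intro m _ hm
      rw [if_neg (fun hc => hm hc.symm)]
    · intro hmem
      exact absurd (Finset.mem_image_of_mem _ (MvPolynomial.mem_support_iff.mpr h)) hmem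

lemma comp_ne_zero_of_mem (w : σ → ℕ) {P : MvPolynomial σ ℂ} {m : ℕ}
    (hm : m ∈ P.support.image (Finsupp.weight w)) :
    weightedHomogeneousComponent w m P ≠ 0 := by
  classical
  obtain ⟨μ, hμ, rfl⟩ := Finset.mem_image.mp hm
  intro h0
  have := coeff_weightedHomogeneousComponent (w := w) (Finsupp.weight w μ) P μ
  rw [h0, MvPolynomial.coeff_zero, if_pos rfl] at this
  exact (MvPolynomial.mem_support_iff.mp hμ) this.symm

lemma comp_mul (w : σ → ℕ) (A B : MvPolynomial σ ℂ) (m : ℕ) :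
    weightedHomogeneousComponent w m (A * B) =
      ∑ a ∈ A.support.image (Finsupp.weight w), ∑ b ∈ B.support.image (Finsupp.weight w),
        if a + b = m then
          weightedHomogeneousComponent w a A * weightedHomogeneousComponent w b B else 0 := by
  classical
  conv_lhs => rw [← sum_comp w A, ← sum_comp w B, Finset.sum_mul_sum]
  rw [map_sum]
  refine Finset.sum_congr rfl fun a _ => ?_
  rw [map_sum]
  refine Finset.sum_congr rfl fun b _ => ?_
  have h : IsWeightedHomogeneous w
      (weightedHomogeneousComponent w a A * weightedHomogeneousComponent w b B) (a + b) :=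
    (weightedHomogeneousComponent_isWeightedHomogeneous a A).mul
      (weightedHomogeneousComponent_isWeightedHomogeneous b B)
  split_ifs with hab
  · exact IsWeightedHomogeneous.weightedHomogeneousComponent_same (hab ▸ h)
  · exact IsWeightedHomogeneous.weightedHomogeneousComponent_ne _ h (fun hc => hab hc.symm)

lemma comp_mul_right_hom (w : σ → ℕ) {f : MvPolynomial σ ℂ} {e : ℕ}
    (hf : IsWeightedHomogeneous w f e) (g : MvPolynomial σ ℂ) {D : ℕ} (he : e ≤ D) :
    weightedHomogeneousComponent w D (g * f) =
      weightedHomogeneousComponent w (D - e) g * f := by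
  classical
  have h1 : ∀ a : ℕ,
      weightedHomogeneousComponent w D (weightedHomogeneousComponent w a g * f) =
        if a = D - e then weightedHomogeneousComponent w a g * f else 0 := by
    intro a
    have h : IsWeightedHomogeneous w (weightedHomogeneousComponent w a g * f) (a + e) :=
      (weightedHomogeneousComponent_isWeightedHomogeneous a g).mul hf
    split_ifs with ha
    · exact IsWeightedHomogeneous.weightedHomogeneousComponent_same
        (by rw [show a + e = D by omega] at h; exact h)
    · exact IsWeightedHomogeneous.weightedHomogeneousComponent_ne _ h (by omega)
  calc weightedHomogeneousComponent w D (g * f)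
      = ∑ a ∈ g.support.image (Finsupp.weight w),
          weightedHomogeneousComponent w D (weightedHomogeneousComponent w a g * f) := by
        conv_lhs => rw [← sum_comp w g]
        rw [Finset.sum_mul, map_sum]
    _ = ∑ a ∈ g.support.image (Finsupp.weight w),
          if a = D - e then weightedHomogeneousComponent w a g * f else 0 :=
        Finset.sum_congr rfl fun a _ => h1 a
    _ = if D - e ∈ g.support.image (Finsupp.weight w) then
          weightedHomogeneousComponent w (D - e) g * f else 0 :=
        Finset.sum_ite_eq' _ _ _
    _ = weightedHomogeneousComponent w (D - e) g * f := by
        split_ifs with hmem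
        · rfl
        · rw [weightedHomogeneousComponent_eq_zero' (D - e) g, zero_mul]
          intro μ hμ hc
          exact hmem (Finset.mem_image.mpr ⟨μ, hμ, hc⟩)

lemma comp_mul_of_uniq {w : σ → ℕ} {A B : MvPolynomial σ ℂ} {a1 b1 : ℕ}
    (ha1 : a1 ∈ A.support.image (Finsupp.weight w))
    (hb1 : b1 ∈ B.support.image (Finsupp.weight w))
    (huniq : ∀ a ∈ A.support.image (Finsupp.weight w),
        ∀ b ∈ B.support.image (Finsupp.weight w), a + b = a1 + b1 → a = a1 ∧ b = b1) :
    weightedHomogeneousComponent w (a1 + b1) (A * B) =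
      weightedHomogeneousComponent w a1 A * weightedHomogeneousComponent w b1 B := by
  classical
  rw [comp_mul]
  rw [Finset.sum_eq_single a1]
  · rw [Finset.sum_eq_single b1]
    · rw [if_pos rfl]
    · intro b hb hbne
      rw [if_neg (fun habs => hbne (huniq a1 ha1 b hb habs).2)]
    · intro habs; exact absurd hb1 habs
  · intro a ha hane
    refine Finset.sum_eq_zero fun b hb => ?_
    rw [if_neg (fun habs => hane (huniq a ha b hb habs).1)]
  · intro habs; exact absurd ha1 habs

/-- factors of a nonzero weighted homogeneous polynomial are weighted homogeneous -/
lemma isWH_of_mul {w : σ → ℕ} {A B : MvPolynomial σ ℂ} {n : ℕ}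
    (h : IsWeightedHomogeneous w (A * B) n) (hA : A ≠ 0) (hB : B ≠ 0) :
    ∃ a b : ℕ, a + b = n ∧ IsWeightedHomogeneous w A a ∧ IsWeightedHomogeneous w B b := by
  classical
  have hSA : (A.support.image (Finsupp.weight w)).Nonempty :=
    (Finset.image_nonempty).2 (MvPolynomial.support_nonempty.2 hA)
  have hSB : (B.support.image (Finsupp.weight w)).Nonempty :=
    (Finset.image_nonempty).2 (MvPolynomial.support_nonempty.2 hB)
  set SA := A.support.image (Finsupp.weight w) with hSAdef
  set SB := B.support.image (Finsupp.weight w) with hSBdef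
  have key : ∀ a' ∈ SA, ∀ b' ∈ SB,
      (∀ a ∈ SA, ∀ b ∈ SB, a + b = a' + b' → a = a' ∧ b = b') → a' + b' = n := by
    intro a' ha' b' hb' huniq
    by_contra hne
    have h0 : weightedHomogeneousComponent w (a' + b') (A * B) = 0 :=
      IsWeightedHomogeneous.weightedHomogeneousComponent_ne _ h hne
    rw [comp_mul_of_uniq ha' hb' huniq] at h0
    exact mul_ne_zero (comp_ne_zero_of_mem w ha') (comp_ne_zero_of_mem w hb') h0
  have h1 : SA.max' hSA + SB.max' hSB = n := by
    refine key _ (SA.max'_mem hSA) _ (SB.max'_mem hSB) fun a ha b hb hab => ?_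
    have := SA.le_max' a ha
    have := SB.le_max' b hb
    omega
  have h0' : SA.min' hSA + SB.min' hSB = n := by
    refine key _ (SA.min'_mem hSA) _ (SB.min'_mem hSB) fun a ha b hb hab => ?_
    have := SA.min'_le a ha
    have := SB.min'_le b hb
    omega
  have hAle := SA.min'_le _ (SA.max'_mem hSA)
  have hBle := SB.min'_le _ (SB.max'_mem hSB)
  refine ⟨SA.max' hSA, SB.max' hSB, h1, ?_, ?_⟩
  · intro μ hc
    have hmem : Finsupp.weight w μ ∈ SA :=
      Finset.mem_image_of_mem _ (MvPolynomial.mem_support_iff.mpr hc)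
    have := SA.le_max' _ hmem
    have := SA.min'_le _ hmem
    omega
  · intro μ hc
    have hmem : Finsupp.weight w μ ∈ SB :=
      Finset.mem_image_of_mem _ (MvPolynomial.mem_support_iff.mpr hc)
    have := SB.le_max' _ hmem
    have := SB.min'_le _ hmem
    omega


set_option maxHeartbeats 2000000 in
/-- Three weighted homogeneous polynomials of positive degree in four variables over ℂ
have a common nonzero zero. -/
lemma key (w : Fin 4 → ℕ) (hw : ∀ j, 0 < w j) (f : Fin 3 → MvPolynomial (Fin 4) ℂ)
    (e : Fin 3 → ℕ) (he : ∀ t, 0 < e t) (hf : ∀ t, IsWeightedHomogeneous w (f t) (e t)) :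
    ∃ p : Fin 4 → ℂ, p ≠ 0 ∧ ∀ t, eval p (f t) = 0 := by
  classical
  by_contra hcon
  push_neg at hcon
  set I : Ideal (MvPolynomial (Fin 4) ℂ) := Ideal.span (Set.range f) with hI
  have hXN : ∀ j : Fin 4, ∃ N0 : ℕ, X j ^ N0 ∈ I := by
    intro j
    have hrad : (X j : MvPolynomial (Fin 4) ℂ) ∈ I.radical := by
      rw [← vanishingIdeal_zeroLocus_eq_radical (K := ℂ)]
      intro x hx
      have hx0 : x = 0 := by
        by_contra hxne
        obtain ⟨t, ht⟩ := hcon x hxne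
        exact ht (hx (f t) (Ideal.subset_span (Set.mem_range_self t)))
      rw [hx0]
      simp
    exact hrad
  choose N0 hN0 using hXN
  set N : ℕ := (Finset.univ.sup N0) + (Finset.univ.sup e) + 1 with hN
  have hN1 : 1 ≤ N := by omega
  have hNe : ∀ t, e t ≤ N := fun t => by
    have := Finset.le_sup (Finset.mem_univ t) (f := e); omega
  have hXNI : ∀ j : Fin 4, (X j : MvPolynomial (Fin 4) ℂ) ^ N ∈ I := by
    intro j
    have hle : N0 j ≤ N := by
      have := Finset.le_sup (Finset.mem_univ j) (f := N0); omega
    rw [show N = (N - N0 j) + N0 j by omega, pow_add]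
    exact I.mul_mem_left _ (hN0 j)
  -- homogeneous representation of X j ^ N
  have hrep : ∀ j : Fin 4, ∃ g : Fin 3 → MvPolynomial (Fin 4) ℂ,
      (∀ t, IsWeightedHomogeneous w (g t) (N * w j - e t)) ∧
        ∑ t, g t * f t = (X j : MvPolynomial (Fin 4) ℂ) ^ N := by
    intro j
    obtain ⟨c, hc⟩ := Ideal.mem_span_range_iff_exists_fun.mp (hXNI j)
    have hhom : IsWeightedHomogeneous w ((X j : MvPolynomial (Fin 4) ℂ) ^ N) (N * w j) := by
      rw [X_pow_eq_monomial]
      refine isWeightedHomogeneous_monomial _ _ _ ?_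
      rw [Finsupp.weight_apply, Finsupp.sum_single_index (by simp), smul_eq_mul]
    have heD : ∀ t, e t ≤ N * w j := fun t =>
      le_trans (hNe t) (Nat.le_mul_of_pos_right N (hw j))
    refine ⟨fun t => weightedHomogeneousComponent w (N * w j - e t) (c t),
      fun t => weightedHomogeneousComponent_isWeightedHomogeneous _ _, ?_⟩
    calc ∑ t, weightedHomogeneousComponent w (N * w j - e t) (c t) * f t
        = ∑ t, weightedHomogeneousComponent w (N * w j) (c t * f t) :=
          Finset.sum_congr rfl fun t _ =>
            (comp_mul_right_hom w (hf t) (c t) (heD t)).symm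
      _ = weightedHomogeneousComponent w (N * w j) (∑ t, c t * f t) := (map_sum _ _ _).symm
      _ = weightedHomogeneousComponent w (N * w j) ((X j : MvPolynomial (Fin 4) ℂ) ^ N) := by
          rw [hc]
      _ = (X j : MvPolynomial (Fin 4) ℂ) ^ N :=
          IsWeightedHomogeneous.weightedHomogeneousComponent_same hhom
  choose g hg hgsum using hrep
  -- the spanning finsets
  set TT : ℕ → Finset (MvPolynomial (Fin 4) ℂ) := fun D =>
    Finset.image (fun pr : (Fin 4 → Fin N) × (Fin 3 → Fin (D + 1)) =>
      (monomial (Finsupp.equivFunOnFinite.symm fun j => ((pr.1 j : ℕ))) 1) *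
        ∏ t, f t ^ ((pr.2 t : ℕ))) Finset.univ with hTT
  have hTTmono : ∀ {k1 k2 : ℕ}, k1 ≤ k2 → (TT k1 : Set (MvPolynomial (Fin 4) ℂ)) ⊆ TT k2 := by
    intro k1 k2 hk x hx
    obtain ⟨pr, -, rfl⟩ := Finset.mem_image.mp hx
    refine Finset.mem_coe.mpr (Finset.mem_image.mpr
      ⟨⟨pr.1, fun t => ⟨(pr.2 t : ℕ), by have := (pr.2 t).2; omega⟩⟩, Finset.mem_univ _, rfl⟩)
  -- spanning claim
  have hspan : ∀ k : ℕ, ∀ μ : Fin 4 →₀ ℕ, Finsupp.weight w μ = k →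
      (monomial μ 1 : MvPolynomial (Fin 4) ℂ) ∈
        Submodule.span ℂ (TT k : Set (MvPolynomial (Fin 4) ℂ)) := by
    intro k
    induction k using Nat.strong_induction_on with
    | _ k IH =>
      intro μ hμ
      by_cases hbox : ∀ j, μ j < N
      · apply Submodule.subset_span
        refine Finset.mem_coe.mpr (Finset.mem_image.mpr
          ⟨⟨fun j => ⟨μ j, hbox j⟩, fun _ => (0 : Fin (k + 1))⟩, Finset.mem_univ _, ?_⟩)
        simp only [Fin.val_zero, pow_zero, Finset.prod_const_one, mul_one]
        congr 1
        ext j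
        simp
      · push_neg at hbox
        obtain ⟨j, hj⟩ := hbox
        set ν : Fin 4 →₀ ℕ := μ - Finsupp.single j N with hν
        have hμsplit : μ = Finsupp.single j N + ν := by
          ext j'
          rw [Finsupp.add_apply, Finsupp.tsub_apply]
          rcases eq_or_ne j' j with rfl | hj'
          · rw [Finsupp.single_eq_same]; omega
          · rw [Finsupp.single_eq_of_ne' (Ne.symm hj')]; omega
        have hmon : (monomial μ 1 : MvPolynomial (Fin 4) ℂ) =
            (X j : MvPolynomial (Fin 4) ℂ) ^ N * monomial ν 1 := by
          rw [X_pow_eq_monomial, monomial_mul, one_mul, ← hμsplit]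
        rw [hmon, ← hgsum j, Finset.sum_mul]
        apply Submodule.sum_mem
        intro t _
        have hterm : g j t * f t * monomial ν 1 = (g j t * monomial ν 1) * f t := by ring
        rw [hterm]
        set kt := (N * w j - e t) + Finsupp.weight w ν with hkt
        have hPhom : IsWeightedHomogeneous w (g j t * (monomial ν 1 : MvPolynomial (Fin 4) ℂ)) kt :=
          (hg j t).mul (isWeightedHomogeneous_monomial _ _ _ rfl)
        have heN : e t ≤ N * w j := le_trans (hNe t) (Nat.le_mul_of_pos_right N (hw j))
        have hsingle : Finsupp.weight w (Finsupp.single j N) = N * w j := by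
          rw [Finsupp.weight_apply, Finsupp.sum_single_index (by simp), smul_eq_mul]
        have hweq : N * w j + Finsupp.weight w ν = k := by
          rw [← hsingle, ← map_add, ← hμsplit, hμ]
        have hklt : kt < k := by have := he t; omega
        have hkteq : kt + e t = k := by omega
        -- P' ∈ span (TT kt)
        have hP : g j t * monomial ν 1 ∈
            Submodule.span ℂ (TT kt : Set (MvPolynomial (Fin 4) ℂ)) := by
          rw [MvPolynomial.as_sum (g j t * monomial ν 1)]
          apply Submodule.sum_mem
          intro κ hκ
          have hκw : Finsupp.weight w κ = kt := hPhom (MvPolynomial.mem_support_iff.mp hκ)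
          have hsm : (monomial κ (MvPolynomial.coeff κ (g j t * monomial ν 1)) :
              MvPolynomial (Fin 4) ℂ) =
              MvPolynomial.coeff κ (g j t * monomial ν 1) • monomial κ 1 := by
            rw [MvPolynomial.smul_monomial, smul_eq_mul, mul_one]
          rw [hsm]
          exact Submodule.smul_mem _ _ (IH kt hklt κ hκw)
        -- multiply by f t
        have himg : (fun y => y * f t) '' (TT kt : Set (MvPolynomial (Fin 4) ℂ)) ⊆
            (TT k : Set (MvPolynomial (Fin 4) ℂ)) := by
          rintro - ⟨x, hx, rfl⟩
          obtain ⟨pr, -, rfl⟩ := Finset.mem_image.mp hx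
          refine Finset.mem_coe.mpr (Finset.mem_image.mpr
            ⟨⟨pr.1, fun t' => ⟨(pr.2 t' : ℕ) + (if t' = t then 1 else 0), ?_⟩⟩,
              Finset.mem_univ _, ?_⟩)
          · have := (pr.2 t').2
            split_ifs <;> omega
          · show (monomial (Finsupp.equivFunOnFinite.symm fun j => ((pr.1 j : ℕ))) 1 :
                MvPolynomial (Fin 4) ℂ) *
                ∏ t', f t' ^ ((pr.2 t' : ℕ) + (if t' = t then 1 else 0)) =
              ((monomial (Finsupp.equivFunOnFinite.symm fun j => ((pr.1 j : ℕ))) 1 :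
                MvPolynomial (Fin 4) ℂ) * ∏ t', f t' ^ ((pr.2 t' : ℕ))) * f t
            rw [mul_assoc]
            congr 1
            simp only [pow_add]
            rw [Finset.prod_mul_distrib]
            congr 1
            have : ∀ t' : Fin 3, f t' ^ (if t' = t then 1 else 0) =
                if t' = t then f t' else 1 := by
              intro t'; split_ifs <;> simp
            rw [Finset.prod_congr rfl fun t' _ => this t']
            simp
        have hmem : (g j t * monomial ν 1) * f t ∈
            Submodule.map (LinearMap.mulRight ℂ (f t))
              (Submodule.span ℂ (TT kt : Set (MvPolynomial (Fin 4) ℂ))) :=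
          Submodule.mem_map_of_mem hP
        rw [Submodule.map_span] at hmem
        have himg' : (⇑(LinearMap.mulRight ℂ (f t)) '' (TT kt : Set (MvPolynomial (Fin 4) ℂ))) ⊆
            (TT k : Set (MvPolynomial (Fin 4) ℂ)) := by
          rintro - ⟨x, hx, rfl⟩
          exact himg ⟨x, hx, rfl⟩
        exact Submodule.span_mono himg' hmem
  -- counting
  set B : ℕ := ∑ j : Fin 4, w j with hB
  have hB1 : 1 ≤ B := by
    have := hw 0
    have := Finset.single_le_sum (f := w) (fun j _ => Nat.zero_le (w j)) (Finset.mem_univ 0)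
    omega
  set K : ℕ := N ^ 4 * B ^ 3 with hK
  set D : ℕ := K * B with hD
  have hall : ∀ gg : Fin 4 → Fin (K + 1),
      (monomial (Finsupp.equivFunOnFinite.symm fun j => ((gg j : ℕ))) 1 :
        MvPolynomial (Fin 4) ℂ) ∈
        Submodule.span ℂ (TT D : Set (MvPolynomial (Fin 4) ℂ)) := by
    intro gg
    set μ : Fin 4 →₀ ℕ := Finsupp.equivFunOnFinite.symm fun j => ((gg j : ℕ)) with hμdef
    have hwle : Finsupp.weight w μ ≤ D := by
      rw [Finsupp.weight_apply, Finsupp.sum]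
      calc ∑ j ∈ μ.support, μ j • w j ≤ ∑ j : Fin 4, μ j • w j :=
            Finset.sum_le_sum_of_subset (Finset.subset_univ _)
        _ ≤ ∑ j : Fin 4, K * w j := by
            refine Finset.sum_le_sum fun j _ => ?_
            rw [smul_eq_mul]
            have : μ j ≤ K := by
              have := (gg j).2
              simp only [hμdef, Finsupp.coe_equivFunOnFinite_symm]
              omega
            exact Nat.mul_le_mul_right _ this
        _ = K * B := by rw [hB, Finset.mul_sum]
    exact Submodule.span_mono (hTTmono hwle) (hspan _ μ rfl)
  have hLI : LinearIndependent ℂ (fun gg : Fin 4 → Fin (K + 1) =>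
      (monomial (Finsupp.equivFunOnFinite.symm fun j => ((gg j : ℕ))) 1 :
        MvPolynomial (Fin 4) ℂ)) := by
    have hinj : Function.Injective (fun gg : Fin 4 → Fin (K + 1) =>
        (Finsupp.equivFunOnFinite.symm fun j => ((gg j : ℕ)) : Fin 4 →₀ ℕ)) := by
      intro a b hab
      have := Finsupp.equivFunOnFinite.symm.injective hab
      funext j
      exact Fin.val_injective (congrFun this j)
    have hb := (MvPolynomial.basisMonomials (Fin 4) ℂ).linearIndependent
    have := hb.comp _ hinj
    rw [MvPolynomial.coe_basisMonomials] at this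
    exact this
  -- compare cardinalities
  set W := Submodule.span ℂ (TT D : Set (MvPolynomial (Fin 4) ℂ)) with hW
  have hLI' : LinearIndependent ℂ (fun gg : Fin 4 → Fin (K + 1) =>
      (⟨(monomial (Finsupp.equivFunOnFinite.symm fun j => ((gg j : ℕ))) 1 :
        MvPolynomial (Fin 4) ℂ), hall gg⟩ : W)) := by
    exact LinearIndependent.of_comp W.subtype hLI
  have hcard : (K + 1) ^ 4 ≤ (TT D).card := by
    have h1 : Fintype.card (Fin 4 → Fin (K + 1)) ≤ Module.finrank ℂ W :=
      hLI'.fintype_card_le_finrank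
    have h2 : Module.finrank ℂ W ≤ (TT D).card := finrank_span_finset_le_card (TT D)
    have h3 : Fintype.card (Fin 4 → Fin (K + 1)) = (K + 1) ^ 4 := by
      simp [Fintype.card_fun]
    omega
  have hcard2 : (TT D).card ≤ N ^ 4 * (D + 1) ^ 3 := by
    refine le_trans (Finset.card_image_le) ?_
    rw [Finset.card_univ, Fintype.card_prod, Fintype.card_fun, Fintype.card_fun]
    simp
  have harith : N ^ 4 * (D + 1) ^ 3 < (K + 1) ^ 4 := by
    have h1 : D + 1 ≤ B * (K + 1) := by
      calc D + 1 = K * B + 1 := by rw [hD]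
        _ ≤ K * B + B := by omega
        _ = B * (K + 1) := by ring
    calc N ^ 4 * (D + 1) ^ 3 ≤ N ^ 4 * (B * (K + 1)) ^ 3 :=
          Nat.mul_le_mul_left _ (Nat.pow_le_pow_left h1 3)
      _ = (N ^ 4 * B ^ 3) * (K + 1) ^ 3 := by ring
      _ = K * (K + 1) ^ 3 := by rw [hK]
      _ < (K + 1) * (K + 1) ^ 3 := by
          have h3 : 0 < (K + 1) ^ 3 := Nat.pow_pos (Nat.succ_pos K)
          exact (Nat.mul_lt_mul_right h3).mpr (Nat.lt_succ_self K)
      _ = (K + 1) ^ 4 := by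
          rw [show (4 : ℕ) = 3 + 1 from rfl, pow_succ (K + 1) 3]
          exact mul_comm _ _
  omega


variable {σ τ : Type*}

lemma weight_mapDomain (g : τ → σ) (w : σ → ℕ) (μ : τ →₀ ℕ) :
    Finsupp.weight w (Finsupp.mapDomain g μ) = Finsupp.weight (w ∘ g) μ := by
  simp only [Finsupp.weight_apply]
  rw [Finsupp.sum_mapDomain_index (fun b => zero_smul ℕ (w b))
    (fun b m n => add_smul m n (w b))]
  rfl

lemma isWH_rename (g : τ → σ) (w : σ → ℕ) {P : MvPolynomial τ ℂ} {m : ℕ}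
    (h : IsWeightedHomogeneous (w ∘ g) P m) :
    IsWeightedHomogeneous w (rename g P) m := by
  rw [MvPolynomial.as_sum P, map_sum]
  refine IsWeightedHomogeneous.sum _ _ _ fun μ hμ => ?_
  rw [rename_monomial]
  exact isWeightedHomogeneous_monomial _ _ _
    (by rw [weight_mapDomain]; exact h (MvPolynomial.mem_support_iff.mp hμ))

section Restrict

variable (i : Fin 5)

/-- the restriction morphism -/
noncomputable def πm : MvPolynomial (Fin 5) ℂ →ₐ[ℂ] MvPolynomial {k : Fin 5 // k ≠ i} ℂ :=
  aeval (fun j : Fin 5 => if h : j = i then 0 else X ⟨j, h⟩)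

/-- the inclusion morphism -/
noncomputable def ψm : MvPolynomial {k : Fin 5 // k ≠ i} ℂ →ₐ[ℂ] MvPolynomial (Fin 5) ℂ :=
  rename Subtype.val

lemma pi_psi (P : MvPolynomial {k : Fin 5 // k ≠ i} ℂ) : πm i (ψm i P) = P := by
  rw [πm, ψm, aeval_rename]
  have : ((fun j : Fin 5 => if h : j = i then 0 else X ⟨j, h⟩) ∘ Subtype.val :
      {k : Fin 5 // k ≠ i} → MvPolynomial {k : Fin 5 // k ≠ i} ℂ) = X := by
    funext k
    simp only [Function.comp_apply, dif_neg k.2]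
  rw [this, aeval_X_left_apply]

lemma mapDomain_subtypeDomain (μ : Fin 5 →₀ ℕ) (h : μ i = 0) :
    Finsupp.mapDomain (Subtype.val : {k : Fin 5 // k ≠ i} → Fin 5)
      (μ.subtypeDomain (· ≠ i)) = μ := by
  ext j
  by_cases hj : j = i
  · subst hj
    rw [Finsupp.mapDomain_notin_range, h]
    rintro ⟨⟨k, hk⟩, hkk⟩
    exact hk hkk
  · have := Finsupp.mapDomain_apply (Subtype.val_injective)
      (μ.subtypeDomain (· ≠ i)) ⟨j, hj⟩
    simpa using this

lemma psi_monomial (μ : Fin 5 →₀ ℕ) (h : μ i = 0) (c : ℂ) :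
    ψm i (monomial (μ.subtypeDomain (· ≠ i)) c) = monomial μ c := by
  rw [ψm, rename_monomial, mapDomain_subtypeDomain i μ h]

lemma pi_monomial (μ : Fin 5 →₀ ℕ) (c : ℂ) :
    πm i (monomial μ c) =
      if μ i = 0 then monomial (μ.subtypeDomain (· ≠ i)) c else 0 := by
  split_ifs with h
  · rw [← psi_monomial i μ h c, pi_psi]
  · rw [πm, aeval_monomial]
    rw [Finsupp.prod]
    rw [Finset.prod_eq_zero (Finsupp.mem_support_iff.mpr h)
      (by rw [dif_pos rfl]; exact zero_pow h)]
    rw [mul_zero]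

lemma subtypeDomain_weight (w : Fin 5 → ℕ) (μ : Fin 5 →₀ ℕ) (h : μ i = 0) :
    Finsupp.weight (fun k : {k : Fin 5 // k ≠ i} => w k.1) (μ.subtypeDomain (· ≠ i)) =
      Finsupp.weight w μ := by
  conv_rhs => rw [← mapDomain_subtypeDomain i μ h]
  rw [weight_mapDomain]
  rfl

lemma pi_isWH {w : Fin 5 → ℕ} {P : MvPolynomial (Fin 5) ℂ} {d : ℕ}
    (h : IsWeightedHomogeneous w P d) :
    IsWeightedHomogeneous (fun k : {k : Fin 5 // k ≠ i} => w k.1) (πm i P) d := by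
  rw [MvPolynomial.as_sum P, map_sum]
  refine IsWeightedHomogeneous.sum _ _ _ fun μ hμ => ?_
  rw [pi_monomial]
  split_ifs with h0
  · exact isWeightedHomogeneous_monomial _ _ _
      (by rw [subtypeDomain_weight i w μ h0]; exact h (MvPolynomial.mem_support_iff.mp hμ))
  · exact isWeightedHomogeneous_zero _ _ _

lemma dvd_sub_psi_pi (P : MvPolynomial (Fin 5) ℂ) :
    (X i : MvPolynomial (Fin 5) ℂ) ∣ (P - ψm i (πm i P)) := by
  have hrw : P - ψm i (πm i P) = ∑ v ∈ P.support,
      (monomial v (MvPolynomial.coeff v P) -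
        ψm i (πm i (monomial v (MvPolynomial.coeff v P)))) := by
    rw [Finset.sum_sub_distrib, ← map_sum, ← map_sum, ← MvPolynomial.as_sum]
  rw [hrw]
  refine Finset.dvd_sum fun μ _ => ?_
  rw [pi_monomial]
  split_ifs with h
  · rw [psi_monomial i μ h, sub_self]
    exact dvd_zero _
  · rw [map_zero, sub_zero]
    refine ⟨monomial (μ - Finsupp.single i 1) (MvPolynomial.coeff μ P), ?_⟩
    have hind : Finsupp.single i 1 + (μ - Finsupp.single i 1) = μ := by
      ext j
      rw [Finsupp.add_apply, Finsupp.tsub_apply]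
      rcases eq_or_ne j i with rfl | hj
      · rw [Finsupp.single_eq_same]; omega
      · rw [Finsupp.single_eq_of_ne' (Ne.symm hj)]; omega
    rw [X, monomial_mul, one_mul, hind]

lemma eval_pi (q : {k : Fin 5 // k ≠ i} → ℂ) (P : MvPolynomial (Fin 5) ℂ) :
    eval q (πm i P) = eval (fun j : Fin 5 => if h : j = i then 0 else q ⟨j, h⟩) P := by
  induction P using MvPolynomial.induction_on with
  | C c => simp [πm]
  | add P Q hP hQ => simp [map_add, hP, hQ]
  | mul_X P j hP =>
    rw [map_mul, map_mul, hP, map_mul]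
    congr 1
    rw [πm, aeval_X]
    split_ifs with h
    · subst h; simp
    · simp [h]

lemma eval_psi (p : Fin 5 → ℂ) (Q : MvPolynomial {k : Fin 5 // k ≠ i} ℂ) :
    eval p (ψm i Q) = eval (fun k => p k.1) Q := by
  rw [ψm, eval_rename]
  rfl

end Restrict

lemma isWH_div_X {w : Fin 5 → ℕ} {i : Fin 5} {H : MvPolynomial (Fin 5) ℂ} {d : ℕ}
    (h : IsWeightedHomogeneous w ((X i : MvPolynomial (Fin 5) ℂ) * H) d) (hd : w i ≤ d) :
    IsWeightedHomogeneous w H (d - w i) := by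
  intro μ hc
  have h2 : MvPolynomial.coeff (Finsupp.single i 1 + μ)
      ((X i : MvPolynomial (Fin 5) ℂ) * H) ≠ 0 := by
    rw [MvPolynomial.coeff_X_mul]; exact hc
  have h3 := h h2
  rw [map_add] at h3
  have h4 : Finsupp.weight w (Finsupp.single i 1) = w i := by
    rw [Finsupp.weight_apply, Finsupp.sum_single_index] <;> simp
  omega

lemma not_isUnit_of_isWH {w : σ → ℕ} {G : MvPolynomial σ ℂ} {d : ℕ}
    (hG : IsWeightedHomogeneous w G d) (hd : d ≠ 0) : ¬ IsUnit G := by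
  intro hu
  have h0 : MvPolynomial.coeff 0 G = 0 := by
    by_contra hc
    exact hd (by simpa using (hG hc).symm)
  have := hu.map (constantCoeff (σ := σ) (R := ℂ))
  rw [show constantCoeff G = MvPolynomial.coeff 0 G from rfl, h0] at this
  exact not_isUnit_zero this

lemma isUnit_of_isWH_zero {w : σ → ℕ} (hw : ∀ k, 0 < w k) {A : MvPolynomial σ ℂ}
    (h : IsWeightedHomogeneous w A 0) (hA : A ≠ 0) : IsUnit A := by
  classical
  have hAC : A = C (MvPolynomial.coeff 0 A) := by
    ext μ
    rcases eq_or_ne μ 0 with rfl | hμ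
    · simp [MvPolynomial.coeff_C]
    · rw [MvPolynomial.coeff_C, if_neg (Ne.symm hμ)]
      by_contra hc
      have h0 := h hc
      rw [Finsupp.weight_apply, Finsupp.sum] at h0
      apply hμ
      ext k
      simp only [Finsupp.coe_zero, Pi.zero_apply]
      by_cases hk : k ∈ μ.support
      · have h5 := (Finset.sum_eq_zero_iff).mp h0 k hk
        have hwk := hw k
        simp only [smul_eq_mul] at h5
        rcases Nat.mul_eq_zero.mp h5 with h6 | h6
        · exact h6
        · omega
      · exact (Finsupp.notMem_support_iff).mp hk
  have hc0 : MvPolynomial.coeff 0 A ≠ 0 := fun hc => hA (by rw [hAC, hc, map_zero])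
  rw [hAC]
  exact (isUnit_iff_ne_zero.mpr hc0).map (C : ℂ →+* MvPolynomial σ ℂ)


/-- transported version of `key` to the variable set `{k : Fin 5 // k ≠ i}` -/
lemma key' (i : Fin 5) (w' : {k : Fin 5 // k ≠ i} → ℕ) (hw' : ∀ k, 0 < w' k)
    (f : Fin 3 → MvPolynomial {k : Fin 5 // k ≠ i} ℂ) (e : Fin 3 → ℕ)
    (he : ∀ t, 0 < e t) (hf : ∀ t, IsWeightedHomogeneous w' (f t) (e t)) :
    ∃ q : {k : Fin 5 // k ≠ i} → ℂ, q ≠ 0 ∧ ∀ t, eval q (f t) = 0 := by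
  classical
  have hcard : Fintype.card {k : Fin 5 // k ≠ i} = 4 := by
    simp only [Fintype.card_subtype, ne_eq]
    rw [Finset.filter_ne' Finset.univ i, Finset.card_erase_of_mem (Finset.mem_univ i)]
    rfl
  set ee := Fintype.equivFinOfCardEq hcard with hee
  have hcomp : ∀ m (P : MvPolynomial {k : Fin 5 // k ≠ i} ℂ),
      IsWeightedHomogeneous w' P m →
      IsWeightedHomogeneous ((w' ∘ ee.symm) ∘ ee) P m := by
    intro m P hP
    have : (w' ∘ ee.symm) ∘ ee = w' := by
      funext k; simp
    rw [this]
    exact hP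
  obtain ⟨p, hp0, hpz⟩ := key (w' ∘ ee.symm) (fun j => hw' _)
    (fun t => rename ee (f t)) e he
    (fun t => isWH_rename ee (w' ∘ ee.symm) (hcomp _ _ (hf t)))
  refine ⟨p ∘ ee, ?_, ?_⟩
  · intro hq
    apply hp0
    funext x
    have := congrFun hq (ee.symm x)
    simpa using this
  · intro t
    have := hpz t
    rw [eval_rename] at this
    exact this

end QSAux

open QSAux

set_option maxHeartbeats 1000000 in
/-- For a quasi-smooth weighted homogeneous polynomial `F` of degree `d` in five
variables, and every index `i` with `w i < d`, the restriction of `F` to the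
hyperplane `xᵢ = 0` is a nonzero irreducible polynomial in the remaining four
variables. -/
theorem quasismooth_restriction_nonzero_irreducible
    (w : Fin 5 → ℕ) (hw : ∀ i, 0 < w i) (d : ℕ)
    (F : MvPolynomial (Fin 5) ℂ)
    (hhom : IsWeightedHomogeneous w F d)
    (hqs : ∀ p : Fin 5 → ℂ, (∀ i : Fin 5, eval p (pderiv i F) = 0) → p = 0)
    (i : Fin 5) (hi : w i < d) :
    aeval
        ((fun j : Fin 5 => if h : j = i then 0 else X ⟨j, h⟩) :
          Fin 5 → MvPolynomial {k : Fin 5 // k ≠ i} ℂ) F ≠ 0 ∧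
      Irreducible
        (aeval
          ((fun j : Fin 5 => if h : j = i then 0 else X ⟨j, h⟩) :
            Fin 5 → MvPolynomial {k : Fin 5 // k ≠ i} ℂ) F) := by
  classical
  have hGdef : aeval
      ((fun j : Fin 5 => if h : j = i then 0 else X ⟨j, h⟩) :
        Fin 5 → MvPolynomial {k : Fin 5 // k ≠ i} ℂ) F = πm i F := rfl
  rw [hGdef]
  set w' : {k : Fin 5 // k ≠ i} → ℕ := fun k => w k.1 with hw'def
  have hw'pos : ∀ k, 0 < w' k := fun k => hw _
  set G := πm i F with hGdef2
  have hGhom : IsWeightedHomogeneous w' G d := pi_isWH i hhom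
  -- decomposition F = ψ G + X i * H
  obtain ⟨H, hH⟩ := dvd_sub_psi_pi i F
  have hFdecomp : F = ψm i G + X i * H := by rw [← hH]; ring
  have hpsiGhom : IsWeightedHomogeneous w (ψm i G) d := by
    have := isWH_rename (Subtype.val : {k : Fin 5 // k ≠ i} → Fin 5) w (P := G) (m := d) ?_
    · exact this
    · exact hGhom
  have hXHhom : IsWeightedHomogeneous w ((X i : MvPolynomial (Fin 5) ℂ) * H) d := by
    have hsub : (X i : MvPolynomial (Fin 5) ℂ) * H = F - ψm i G := by
      rw [hFdecomp]; ring
    rw [hsub]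
    have h1 : F ∈ weightedHomogeneousSubmodule ℂ w d := hhom
    have h2 : ψm i G ∈ weightedHomogeneousSubmodule ℂ w d := hpsiGhom
    exact Submodule.sub_mem _ h1 h2
  have hHhom : IsWeightedHomogeneous w H (d - w i) := isWH_div_X hXHhom (le_of_lt hi)
  have hH0hom : IsWeightedHomogeneous w' (πm i H) (d - w i) := pi_isWH i hHhom
  have hdpos : 0 < d - w i := by omega
  -- building points on X from common zeros of restrictions
  have hpt : ∀ q : {k : Fin 5 // k ≠ i} → ℂ, q ≠ 0 →
      ¬ (∀ j : Fin 5, eval (fun j : Fin 5 => if h : j = i then 0 else q ⟨j, h⟩)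
          (pderiv j F) = 0) := by
    intro q hq hder
    apply hq
    have hp0 := hqs _ hder
    funext k
    have := congrFun hp0 k.1
    rw [dif_neg k.2] at this
    simpa using this
  -- the common evaluation facts
  have hpq : ∀ q : {k : Fin 5 // k ≠ i} → ℂ,
      ((fun j : Fin 5 => if h : j = i then 0 else q ⟨j, h⟩) ∘
        (Subtype.val : {k : Fin 5 // k ≠ i} → Fin 5)) = q := by
    intro q
    funext k
    simp only [Function.comp_apply, dif_neg k.2]
  -- Part 1 : G ≠ 0
  have hGne : G ≠ 0 := by
    intro hG0
    have hF : F = X i * H := by rw [hFdecomp, hG0, map_zero, zero_add]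
    obtain ⟨q, hq0, hqz⟩ := key' i w' hw'pos ![πm i H, 0, 0] ![d - w i, 1, 1]
      (by intro t; fin_cases t <;> simp [hdpos])
      (by
        intro t
        fin_cases t
        · simpa using hH0hom
        · simpa using isWeightedHomogeneous_zero ℂ w' 1
        · simpa using isWeightedHomogeneous_zero ℂ w' 1)
    refine hpt q hq0 ?_
    intro j
    set p : Fin 5 → ℂ := fun j : Fin 5 => if h : j = i then 0 else q ⟨j, h⟩ with hpdef
    have hpH : eval p H = 0 := by
      have h0 := hqz 0
      simp only [Matrix.cons_val_zero] at h0
      rw [eval_pi] at h0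
      exact h0
    have hpi : p i = 0 := by rw [hpdef]; simp
    rw [hF, pderiv_mul]
    rcases eq_or_ne j i with rfl | hj
    · rw [pderiv_X_self]
      simp [hpH, hpi]
    · rw [pderiv_X_of_ne (Ne.symm hj)]
      simp [hpi]
  refine ⟨hGne, ?_⟩
  -- Part 2 : irreducibility
  have hGnu : ¬ IsUnit G := not_isUnit_of_isWH hGhom (by omega)
  by_contra hirr
  rw [irreducible_iff] at hirr
  push_neg at hirr
  obtain ⟨A, B, hab, hAu, hBu⟩ := hirr hGnu
  have hA0 : A ≠ 0 := fun h => hGne (by rw [hab, h, zero_mul])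
  have hB0 : B ≠ 0 := fun h => hGne (by rw [hab, h, mul_zero])
  obtain ⟨dA, dB, hdsum, hAhom, hBhom⟩ := isWH_of_mul (w := w') (hab ▸ hGhom) hA0 hB0
  have hdA : 0 < dA := by
    rcases Nat.eq_zero_or_pos dA with h0 | h
    · exact absurd (isUnit_of_isWH_zero hw'pos (h0 ▸ hAhom) hA0) hAu
    · exact h
  have hdB : 0 < dB := by
    rcases Nat.eq_zero_or_pos dB with h0 | h
    · exact absurd (isUnit_of_isWH_zero hw'pos (h0 ▸ hBhom) hB0) hBu
    · exact h
  obtain ⟨q, hq0, hqz⟩ := key' i w' hw'pos ![A, B, πm i H] ![dA, dB, d - w i]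
    (by intro t; fin_cases t <;> simp [hdA, hdB, hdpos])
    (by
      intro t
      fin_cases t
      · simpa using hAhom
      · simpa using hBhom
      · simpa using hH0hom)
  refine hpt q hq0 ?_
  intro j
  set p : Fin 5 → ℂ := fun j : Fin 5 => if h : j = i then 0 else q ⟨j, h⟩ with hpdef
  have hpA : eval p (ψm i A) = 0 := by
    rw [eval_psi]
    have h0 := hqz 0
    simp only [Matrix.cons_val_zero] at h0
    have : (fun k : {k : Fin 5 // k ≠ i} => p k.1) = q := hpq q
    rw [this]
    exact h0
  have hpB : eval p (ψm i B) = 0 := by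
    rw [eval_psi]
    have h1 := hqz 1
    simp only [Matrix.cons_val_one, Matrix.head_cons] at h1
    have : (fun k : {k : Fin 5 // k ≠ i} => p k.1) = q := hpq q
    rw [this]
    exact h1
  have hpH : eval p H = 0 := by
    have h2 := hqz 2
    simp only [Matrix.cons_val_two, Matrix.tail_cons, Matrix.head_cons] at h2
    rw [eval_pi] at h2
    exact h2
  have hpi : p i = 0 := by rw [hpdef]; simp
  have hFform : F = ψm i A * ψm i B + X i * H := by
    rw [hFdecomp, hab, map_mul]
  rw [hFform, map_add, pderiv_mul, pderiv_mul]
  rcases eq_or_ne j i with rfl | hj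
  · rw [pderiv_X_self]
    simp [hpA, hpB, hpH, hpi]
  · rw [pderiv_X_of_ne (Ne.symm hj)]
    simp [hpA, hpB, hpi]
end

section
/- Let (w₀,w₁,w₂,w₃,w₄) be positive integer weights with w₀ = 1 and set d = w₃ + 2w₄. Let G ∈ ℂ[x₀,x₁,x₂,x₃] be weighted homogeneous of degree 2w₄ and H ∈ ℂ[x₀,x₁,x₂] be weighted homogeneous of degree d, and put F = x₃·x₄² + x₃·G + H ∈ ℂ[x₀,…,x₄]. If F is quasi-smooth (the only common zero in ℂ⁵ of its five partial derivatives is the origin), then H is irreducible. -/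
open MvPolynomial

noncomputable section QIAux

variable {σ : Type*} {R : Type*} [CommRing R] [IsDomain R]

/-- The ring map sending `X i` to `X i * t ^ w i`. -/
noncomputable def qiGradeMap (w : σ → ℕ) : MvPolynomial σ R →+* Polynomial (MvPolynomial σ R) :=
  MvPolynomial.eval₂Hom (Polynomial.C.comp MvPolynomial.C)
    (fun i => Polynomial.C (MvPolynomial.X i) * Polynomial.X ^ w i)

lemma qiGradeMap_monomial (w : σ → ℕ) (m : σ →₀ ℕ) (c : R) :
    qiGradeMap w (monomial m c) =
      Polynomial.C (monomial m c) * Polynomial.X ^ (Finsupp.weight w m) := by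
  classical
  rw [qiGradeMap, coe_eval₂Hom, eval₂_monomial]
  simp only [RingHom.coe_comp, Function.comp_apply]
  rw [Finsupp.prod]
  have : ∀ i ∈ m.support,
      (Polynomial.C (MvPolynomial.X i) * Polynomial.X ^ w i) ^ m i
        = Polynomial.C ((MvPolynomial.X i : MvPolynomial σ R) ^ m i)
            * Polynomial.X ^ (m i • w i) := by
    intro i _
    rw [mul_pow, ← Polynomial.C_pow, ← pow_mul, smul_eq_mul, mul_comm (m i) (w i), pow_mul,
      ← pow_mul, mul_comm (w i) (m i)]
  rw [Finset.prod_congr rfl this, Finset.prod_mul_distrib, ← map_prod, Finset.prod_pow_eq_pow_sum,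
    monomial_eq, Finsupp.prod, map_mul, Finsupp.weight_apply, Finsupp.sum]
  ring

set_option linter.unusedSectionVars false

lemma qiGradeMap_coeff_coeff (w : σ → ℕ) (p : MvPolynomial σ R) (k : ℕ) (m : σ →₀ ℕ) :
    coeff m ((qiGradeMap w p).coeff k) = if Finsupp.weight w m = k then coeff m p else 0 := by
  classical
  induction p using MvPolynomial.induction_on' with
  | monomial m' c =>
    rw [qiGradeMap_monomial]
    rw [Polynomial.coeff_C_mul, Polynomial.coeff_X_pow]
    by_cases hmm : m = m'
    · subst hmm
      by_cases hk : Finsupp.weight w m = k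
      · simp [hk]
      · simp [hk, Ne.symm hk]
    · split <;> simp [coeff_monomial, Ne.symm hmm]
  | add p q hp hq =>
    rw [map_add, Polynomial.coeff_add, coeff_add, hp, hq]
    split <;> simp

lemma qiGradeMap_eq_of_isWeightedHomogeneous {w : σ → ℕ} {p : MvPolynomial σ R} {d : ℕ}
    (h : IsWeightedHomogeneous w p d) :
    qiGradeMap w p = Polynomial.C p * Polynomial.X ^ d := by
  ext k m : 2
  rw [qiGradeMap_coeff_coeff, Polynomial.coeff_C_mul, Polynomial.coeff_X_pow]
  by_cases hc : coeff m p = 0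
  · split <;> split <;> simp [hc]
  · have := h hc
    subst this
    by_cases hk : Finsupp.weight w m = k
    · simp [hk]
    · simp [hk, Ne.symm hk]

lemma qiGradeMap_ne_zero {w : σ → ℕ} {p : MvPolynomial σ R} (hp : p ≠ 0) :
    qiGradeMap w p ≠ 0 := by
  intro h
  apply hp
  ext m
  have := qiGradeMap_coeff_coeff w p (Finsupp.weight w m) m
  rw [h] at this
  simpa using this.symm

/-- Factors of a weighted homogeneous polynomial are weighted homogeneous. -/
lemma isWeightedHomogeneous_of_mul (w : σ → ℕ) {p q : MvPolynomial σ R} {d : ℕ}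
    (hp : p ≠ 0) (hq : q ≠ 0) (h : IsWeightedHomogeneous w (p * q) d) :
    ∃ dp dq : ℕ, dp + dq = d ∧ IsWeightedHomogeneous w p dp ∧ IsWeightedHomogeneous w q dq := by
  classical
  set f := qiGradeMap w p with hf
  set g := qiGradeMap w q with hg
  have hf0 : f ≠ 0 := qiGradeMap_ne_zero hp
  have hg0 : g ≠ 0 := qiGradeMap_ne_zero hq
  have hpq : p * q ≠ 0 := mul_ne_zero hp hq
  have hfg : f * g = Polynomial.C (p * q) * Polynomial.X ^ d := by
    rw [hf, hg, ← map_mul, qiGradeMap_eq_of_isWeightedHomogeneous h]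
  have hdeg : f.natDegree + g.natDegree = d := by
    have := Polynomial.natDegree_mul hf0 hg0
    rw [hfg] at this
    rw [← this, Polynomial.C_mul_X_pow_eq_monomial, Polynomial.natDegree_monomial]
    simp [hpq]
  have htr : f.natTrailingDegree + g.natTrailingDegree = d := by
    have := Polynomial.natTrailingDegree_mul hf0 hg0
    rw [hfg] at this
    rw [← this, Polynomial.C_mul_X_pow_eq_monomial, Polynomial.natTrailingDegree_monomial hpq]
  have h1 : f.natTrailingDegree = f.natDegree := by
    have l1 := Polynomial.natTrailingDegree_le_natDegree f
    have l2 := Polynomial.natTrailingDegree_le_natDegree g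
    omega
  have h2 : g.natTrailingDegree = g.natDegree := by
    have l1 := Polynomial.natTrailingDegree_le_natDegree f
    have l2 := Polynomial.natTrailingDegree_le_natDegree g
    omega
  refine ⟨f.natDegree, g.natDegree, hdeg, ?_, ?_⟩
  · intro m hm
    have hcoeff : f.coeff (Finsupp.weight w m) ≠ 0 := by
      intro hzero
      have := qiGradeMap_coeff_coeff w p (Finsupp.weight w m) m
      rw [← hf, hzero] at this
      simp only [coeff_zero, if_pos rfl] at this
      exact hm this.symm
    have hle := Polynomial.le_natDegree_of_ne_zero hcoeff
    have hge := Polynomial.natTrailingDegree_le_of_ne_zero hcoeff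
    omega
  · intro m hm
    have hcoeff : g.coeff (Finsupp.weight w m) ≠ 0 := by
      intro hzero
      have := qiGradeMap_coeff_coeff w q (Finsupp.weight w m) m
      rw [← hg, hzero] at this
      simp only [coeff_zero, if_pos rfl] at this
      exact hm this.symm
    have hle := Polynomial.le_natDegree_of_ne_zero hcoeff
    have hge := Polynomial.natTrailingDegree_le_of_ne_zero hcoeff
    omega

/-- weight with indicator weights computes a single exponent. -/
lemma weight_indicator {n : ℕ} (j : Fin n) (m : Fin n →₀ ℕ) :
    Finsupp.weight (fun i => if i = j then 1 else 0 : Fin n → ℕ) m = m j := by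
  classical
  rw [Finsupp.weight_apply, Finsupp.sum]
  rw [Finset.sum_eq_single j]
  · simp
  · intro b _ hb; simp [hb]
  · intro hj; simp [Finsupp.notMem_support_iff.mp hj]

lemma eq_C_of_isWeightedHomogeneous_zero {n : ℕ} {w : Fin n → ℕ} (hw : ∀ i, 0 < w i)
    {p : MvPolynomial (Fin n) R} (h : IsWeightedHomogeneous w p 0) :
    p = C (coeff 0 p) := by
  classical
  ext m
  by_cases hm : m = 0
  · subst hm; simp [coeff_C]
  · rw [coeff_C, if_neg (Ne.symm hm)]
    by_contra hc
    have h0 := h hc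
    rw [Finsupp.weight_apply, Finsupp.sum, Finset.sum_eq_zero_iff] at h0
    apply hm
    ext i
    simp only [Finsupp.coe_zero, Pi.zero_apply]
    by_cases hi : i ∈ m.support
    · have := h0 i hi
      have hwi := hw i
      simp only [smul_eq_mul] at this
      rcases Nat.mul_eq_zero.mp this with h' | h'
      · exact h'
      · exact absurd h' (hw i).ne'
    · simpa using Finsupp.notMem_support_iff.mp hi

lemma mv_exists_eval_ne_zero {σ : Type*} {p : MvPolynomial σ ℂ} (hp : p ≠ 0) :
    ∃ x : σ → ℂ, eval x p ≠ 0 := by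
  by_contra hc
  push_neg at hc
  exact hp (MvPolynomial.funext_iff.mpr (by simpa using hc))

/-- `aeval` at homogeneous values maps weighted homogeneous polynomials to homogeneous ones. -/
lemma aeval_isHomogeneous_of {k l : ℕ} (g : Fin k → MvPolynomial (Fin l) ℂ) (e : Fin k → ℕ)
    (hg : ∀ i, (g i).IsHomogeneous (e i)) {p : MvPolynomial (Fin k) ℂ} {n : ℕ}
    (hp : ∀ m ∈ p.support, Finsupp.weight e m = n) :
    (aeval g p).IsHomogeneous n := by
  classical
  rw [← support_sum_monomial_coeff p, map_sum]
  apply IsHomogeneous.sum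
  intro m hm
  rw [aeval_monomial]
  have h1 : (Finsupp.prod m fun i ki => g i ^ ki).IsHomogeneous (Finsupp.weight e m) := by
    rw [Finsupp.prod, Finsupp.weight_apply, Finsupp.sum]
    apply IsHomogeneous.prod
    intro i _
    rw [smul_eq_mul, mul_comm]
    exact (hg i).pow (m i)
  have := (isHomogeneous_C (σ := Fin l) (algebraMap ℂ ℂ (coeff m p))).mul h1
  rw [zero_add, hp m hm] at this
  convert this using 2
  simp [MvPolynomial.algebraMap_eq]

lemma finsupp_cons_zero_eq_single {k : ℕ} (d : ℕ) :
    Finsupp.cons d (0 : Fin k →₀ ℕ) = Finsupp.single (0 : Fin (k + 1)) d := by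
  ext i
  refine Fin.cases ?_ ?_ i
  · simp
  · intro j
    rw [Finsupp.cons_succ]
    simp [Finsupp.single_eq_of_ne (Fin.succ_ne_zero j).symm]

lemma finsupp_degree_single {τ : Type*} (a : τ) (m : ℕ) :
    (Finsupp.single a m).degree = m := by
  classical
  by_cases hm : m = 0
  · simp [hm, Finsupp.degree]
  · exact Finsupp.degree_single a m

lemma eval_onehot_of_isHomogeneous {k : ℕ} {p : MvPolynomial (Fin (k + 1)) ℂ} {n : ℕ}
    (h : p.IsHomogeneous n) :
    eval (Fin.cons 1 (0 : Fin k → ℂ)) p = coeff (Finsupp.single 0 n) p := by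
  classical
  set x : Fin (k + 1) → ℂ := Fin.cons 1 (0 : Fin k → ℂ) with hx
  have hx0 : x 0 = 1 := rfl
  have hxs : ∀ j : Fin k, x j.succ = 0 := fun j => Fin.cons_succ _ _ _
  rw [eval_eq]
  rw [Finset.sum_eq_single (Finsupp.single (0 : Fin (k + 1)) n)]
  · have h1 : ∀ i ∈ (Finsupp.single (0 : Fin (k + 1)) n).support,
        x i ^ (Finsupp.single (0 : Fin (k + 1)) n) i = 1 := by
      intro i hi
      have hi0 : i = 0 := Finset.mem_singleton.mp (Finsupp.support_single_subset hi)
      subst hi0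
      rw [hx0, one_pow]
    rw [Finset.prod_congr rfl h1]
    simp
  · intro b hb hba
    by_cases hall : ∀ i ∈ b.support, i = 0
    · exfalso
      apply hba
      have hb0 : b = Finsupp.single 0 (b 0) := by
        ext i
        by_cases hi : i ∈ b.support
        · have := hall i hi; subst this; simp
        · rw [Finsupp.notMem_support_iff.mp hi]
          by_cases hi0 : i = 0
          · subst hi0
            rw [Finsupp.notMem_support_iff.mp hi] at *
            simp
          · rw [Finsupp.single_eq_of_ne hi0]
      have hdeg := h (mem_support_iff.mp hb)
      change Finsupp.weight (fun _ => 1) b = n at hdeg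
      rw [← Finsupp.degree_eq_weight_one, hb0, finsupp_degree_single] at hdeg
      rw [hb0, hdeg]
    · push_neg at hall
      obtain ⟨i, hi, hi0⟩ := hall
      have hz : x i ^ b i = 0 := by
        obtain ⟨j, rfl⟩ := Fin.exists_succ_eq.mpr hi0
        rw [hxs j]
        exact zero_pow (Finsupp.mem_support_iff.mp hi)
      rw [Finset.prod_eq_zero hi hz, mul_zero]
  · intro ha
    rw [notMem_support_iff.mp ha, zero_mul]

lemma exists_nonzero_root_two_vars {N : MvPolynomial (Fin 2) ℂ}
    (h0 : eval (0 : Fin 2 → ℂ) N = 0) :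
    ∃ β : Fin 2 → ℂ, β ≠ 0 ∧ eval β N = 0 := by
  classical
  have hc00 : (Fin.cons 0 (0 : Fin 1 → ℂ)) = (0 : Fin 2 → ℂ) := by
    funext i
    refine Fin.cases rfl (fun j => rfl) i
  have hcons_ne : ∀ (r : ℂ) (y : Fin 1 → ℂ), y ≠ 0 → Fin.cons r y ≠ (0 : Fin 2 → ℂ) := by
    intro r y hy h
    apply hy
    funext j
    have := congrFun h j.succ
    rwa [Fin.cons_succ] at this
  by_cases hN : N = 0
  · refine ⟨Fin.cons 1 0, ?_, by simp [hN]⟩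
    intro h
    have := congrFun h 0
    rw [Fin.cons_zero] at this
    exact one_ne_zero this
  set n' := finSuccEquiv ℂ 1 N with hn'
  have hn0 : n' ≠ 0 := by
    intro h
    apply hN
    apply (finSuccEquiv ℂ 1).injective
    rw [← hn', h, map_zero]
  by_cases hm : n'.natDegree = 0
  · obtain ⟨e, he⟩ := Polynomial.natDegree_eq_zero.mp hm
    have key : ∀ t : ℂ, eval (Fin.cons t (0 : Fin 1 → ℂ)) N = eval (0 : Fin 1 → ℂ) e := by
      intro t
      rw [eval_eq_eval_mv_eval', ← hn', ← he, Polynomial.map_C, Polynomial.eval_C]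
    refine ⟨Fin.cons 1 0, ?_, ?_⟩
    · intro h
      have := congrFun h 0
      rw [Fin.cons_zero] at this
      exact one_ne_zero this
    · rw [key 1, ← key 0, hc00, h0]
  · set e := n'.leadingCoeff with he
    have he0 : e ≠ 0 := Polynomial.leadingCoeff_ne_zero.mpr hn0
    obtain ⟨y, hy⟩ := mv_exists_eval_ne_zero (mul_ne_zero he0 (X_ne_zero (R := ℂ) (σ := Fin 1) 0))
    rw [map_mul, eval_X, mul_ne_zero_iff] at hy
    obtain ⟨hye, hy0⟩ := hy
    set g : Polynomial ℂ := n'.map (eval y) with hg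
    have hgc : g.coeff n'.natDegree ≠ 0 := by
      rw [hg, Polynomial.coeff_map]
      exact hye
    have hgdeg : g.natDegree = n'.natDegree :=
      le_antisymm Polynomial.natDegree_map_le (Polynomial.le_natDegree_of_ne_zero hgc)
    have hg0 : g ≠ 0 := fun h => hgc (by rw [h, Polynomial.coeff_zero])
    have hdeg : g.degree ≠ 0 := by
      rw [Polynomial.degree_eq_natDegree hg0, hgdeg]
      exact_mod_cast hm
    obtain ⟨r, hr⟩ := IsAlgClosed.exists_root g hdeg
    refine ⟨Fin.cons r y, hcons_ne r y (fun h => hy0 (congrFun h 0)), ?_⟩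
    rw [eval_eq_eval_mv_eval', ← hn']
    exact hr

lemma eval_aeval' {k l : ℕ} (g : Fin k → MvPolynomial (Fin l) ℂ) (y : Fin l → ℂ)
    (p : MvPolynomial (Fin k) ℂ) :
    eval y (aeval g p) = eval (fun i => eval y (g i)) p := by
  rw [aeval_def, algebraMap_eq, eval₂_comp_left (eval y)]
  have hid : (eval y).comp (C : ℂ →+* MvPolynomial (Fin l) ℂ) = RingHom.id ℂ := by
    ext r
    simp
  rw [hid]
  rw [← eval₂_id]
  rfl

lemma finSuccEquiv_coeff_facts {T : MvPolynomial (Fin 3) ℂ} {d : ℕ}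
    (hT : T.IsHomogeneous d) (hT0 : T ≠ 0) :
    (∀ k, d < k → (finSuccEquiv ℂ 2 T).coeff k = 0) ∧
    ((finSuccEquiv ℂ 2 T).coeff d = C (eval (Fin.cons 1 (0 : Fin 2 → ℂ)) T)) ∧
    (∀ k, k ≠ d → eval (0 : Fin 2 → ℂ) ((finSuccEquiv ℂ 2 T).coeff k) = 0) := by
  classical
  have hdeg : (finSuccEquiv ℂ 2 T).natDegree ≤ d := by
    rw [natDegree_finSuccEquiv]
    exact (degreeOf_le_totalDegree T 0).trans (le_of_eq (hT.totalDegree hT0))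
  have hhi : ∀ k, d < k → (finSuccEquiv ℂ 2 T).coeff k = 0 := by
    intro k hk
    exact Polynomial.coeff_eq_zero_of_natDegree_lt (lt_of_le_of_lt hdeg hk)
  refine ⟨hhi, ?_, ?_⟩
  · ext m
    rw [finSuccEquiv_coeff_coeff]
    by_cases hm : m = 0
    · subst hm
      rw [finsupp_cons_zero_eq_single, ← eval_onehot_of_isHomogeneous hT]
      simp [coeff_C]
    · have hcomp := hT.finSuccEquiv_coeff_isHomogeneous d 0 (add_zero d)
      have h1 : coeff m ((finSuccEquiv ℂ 2 T).coeff d) = 0 := by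
        apply hcomp.coeff_eq_zero
        rw [Ne, Finsupp.degree_eq_zero_iff]
        exact hm
      rw [finSuccEquiv_coeff_coeff] at h1
      rw [h1, coeff_C, if_neg (Ne.symm hm)]
  · intro k hk
    rcases lt_or_gt_of_ne hk with hlt | hgt
    · have hcomp := hT.finSuccEquiv_coeff_isHomogeneous k (d - k) (by omega)
      rw [eval_zero, constantCoeff_eq]
      apply hcomp.coeff_eq_zero
      rw [map_zero]
      omega
    · rw [hhi k hgt, map_zero]

lemma C_mul_modByMonic {q : Polynomial ℂ} (a : ℂ) (p : Polynomial ℂ) :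
    (Polynomial.C a * p) %ₘ q = Polynomial.C a * (p %ₘ q) := by
  rw [← Polynomial.smul_eq_C_mul, ← Polynomial.smul_eq_C_mul, Polynomial.smul_modByMonic]

lemma sum_modByMonic {ι : Type*} (s : Finset ι) (f : ι → Polynomial ℂ) (q : Polynomial ℂ) :
    (∑ i ∈ s, f i) %ₘ q = ∑ i ∈ s, (f i %ₘ q) := by
  classical
  induction s using Finset.induction_on with
  | empty => simp
  | insert a s h ih =>
      rw [Finset.sum_insert h, Finset.sum_insert h, Polynomial.add_modByMonic, ih]

/-- Two homogeneous polynomials of positive degree in three variables over `ℂ`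
have a common zero away from the origin. -/
lemma exists_common_root_of_isHomogeneous {P Q : MvPolynomial (Fin 3) ℂ} {dp dq : ℕ}
    (hPh : P.IsHomogeneous dp) (hQh : Q.IsHomogeneous dq) (hP0 : P ≠ 0) (hQ0 : Q ≠ 0)
    (hdp : dp ≠ 0) (hdq : dq ≠ 0) :
    ∃ y : Fin 3 → ℂ, y ≠ 0 ∧ eval y P = 0 ∧ eval y Q = 0 := by
  classical
  -- choose a generic direction
  obtain ⟨a, ha⟩ := mv_exists_eval_ne_zero
    (mul_ne_zero (mul_ne_zero hP0 hQ0) (X_ne_zero (σ := Fin 3) (R := ℂ) 0))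
  rw [map_mul, map_mul, eval_X, mul_ne_zero_iff, mul_ne_zero_iff] at ha
  obtain ⟨⟨haP, haQ⟩, ha0⟩ := ha
  -- linear change of variables
  set g : Fin 3 → MvPolynomial (Fin 3) ℂ :=
    fun i => if i = 0 then C (a 0) * X 0 else X i + C (a i) * X 0 with hgdef
  have hg1 : ∀ i, (g i).IsHomogeneous 1 := by
    intro i
    simp only [hgdef]
    by_cases hi : i = 0
    · rw [if_pos hi]
      simpa using (isHomogeneous_C (Fin 3) (a 0)).mul (isHomogeneous_X ℂ 0)
    · rw [if_neg hi]
      exact (isHomogeneous_X ℂ i).add (by simpa using (isHomogeneous_C (Fin 3) (a i)).mul (isHomogeneous_X ℂ 0))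
  set Pt := aeval g P with hPt
  set Qt := aeval g Q with hQt
  have hPth : Pt.IsHomogeneous dp := by
    apply aeval_isHomogeneous_of g (fun _ => 1) hg1
    intro m hm
    exact hPh (mem_support_iff.mp hm)
  have hQth : Qt.IsHomogeneous dq := by
    apply aeval_isHomogeneous_of g (fun _ => 1) hg1
    intro m hm
    exact hQh (mem_support_iff.mp hm)
  -- evaluation at the distinguished direction
  have hgone : (fun i => eval (Fin.cons 1 (0 : Fin 2 → ℂ)) (g i)) = a := by
    funext i
    simp only [hgdef]
    by_cases hi : i = 0
    · subst hi; simp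
    · rw [if_neg hi]
      obtain ⟨j, rfl⟩ := Fin.exists_succ_eq.mpr hi
      simp [Fin.cons_succ]
  have hPte : eval (Fin.cons 1 (0 : Fin 2 → ℂ)) Pt = eval a P := by
    rw [hPt, eval_aeval', hgone]
  have hQte : eval (Fin.cons 1 (0 : Fin 2 → ℂ)) Qt = eval a Q := by
    rw [hQt, eval_aeval', hgone]
  have hPt0 : Pt ≠ 0 := by
    intro h
    rw [h, map_zero] at hPte
    exact haP hPte.symm
  have hQt0 : Qt ≠ 0 := by
    intro h
    rw [h, map_zero] at hQte
    exact haQ hQte.symm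
  set cP := eval a P with hcP
  set cQ := eval a Q with hcQ
  obtain ⟨hPhi, hPtop, hPzero⟩ := finSuccEquiv_coeff_facts hPth hPt0
  obtain ⟨hQhi, hQtop, hQzero⟩ := finSuccEquiv_coeff_facts hQth hQt0
  rw [hPte] at hPtop
  rw [hQte] at hQtop
  set p' := finSuccEquiv ℂ 2 Pt with hp'
  set q' := finSuccEquiv ℂ 2 Qt with hq'
  -- monic normalization of p'
  set p₀ := Polynomial.C (C cP⁻¹) * p' with hp₀
  have hp₀coeff : ∀ k, p₀.coeff k = C cP⁻¹ * p'.coeff k := by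
    intro k; rw [hp₀, Polynomial.coeff_C_mul]
  have hp₀top : p₀.coeff dp = 1 := by
    rw [hp₀coeff, hPtop, ← C_mul, inv_mul_cancel₀ haP, C_1]
  have hp₀hi : ∀ k, dp < k → p₀.coeff k = 0 := by
    intro k hk; rw [hp₀coeff, hPhi k hk, mul_zero]
  have hp₀deg : p₀.natDegree = dp := by
    apply le_antisymm
    · exact Polynomial.natDegree_le_iff_coeff_eq_zero.mpr (fun k hk => hp₀hi k hk)
    · apply Polynomial.le_natDegree_of_ne_zero
      rw [hp₀top]; exact one_ne_zero
  have hp₀monic : p₀.Monic := by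
    rw [Polynomial.Monic, Polynomial.leadingCoeff, hp₀deg, hp₀top]
  have hp'back : Polynomial.C (C cP) * p₀ = p' := by
    rw [hp₀, ← mul_assoc, ← Polynomial.C_mul, ← C_mul, mul_inv_cancel₀ haP, C_1, Polynomial.C_1,
      one_mul]
  -- the resultant-like matrix
  set M : Matrix (Fin dp) (Fin dp) (MvPolynomial (Fin 2) ℂ) :=
    fun i j => ((q' * Polynomial.X ^ (j : ℕ)) %ₘ p₀).coeff (i : ℕ) with hM
  set N := M.det with hN
  -- Claim A : any zero of N gives a common root of the specializations
  have claimA : ∀ β : Fin 2 → ℂ, eval β N = 0 →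
      ∃ r : ℂ, Polynomial.eval r (p'.map (eval β)) = 0 ∧
        Polynomial.eval r (q'.map (eval β)) = 0 := by
    intro β hβ
    set φ := (eval β : MvPolynomial (Fin 2) ℂ →+* ℂ) with hφ
    set pb := p₀.map φ with hpb
    set qb := q'.map φ with hqb
    have hpbmonic : pb.Monic := hp₀monic.map φ
    have hpbdeg : pb.natDegree = dp := by
      rw [hpb, hp₀monic.natDegree_map, hp₀deg]
    have hpb0 : pb ≠ 0 := hpbmonic.ne_zero
    have hdet : (M.map φ).det = 0 := by
      rw [← RingHom.mapMatrix_apply, ← RingHom.map_det]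
      exact hβ
    obtain ⟨v, hv0, hveq⟩ := (Matrix.exists_mulVec_eq_zero_iff (A := ℂ)).mpr hdet
    set V : Polynomial ℂ := ∑ j : Fin dp, Polynomial.C (v j) * Polynomial.X ^ (j : ℕ) with hV
    have hVcoeff : ∀ k : ℕ, V.coeff k = if h : k < dp then v ⟨k, h⟩ else 0 := by
      intro k
      rw [hV, Polynomial.finset_sum_coeff]
      by_cases hk : k < dp
      · rw [dif_pos hk, Finset.sum_eq_single (⟨k, hk⟩ : Fin dp)]
        · simp
        · intro j _ hj
          rw [Polynomial.coeff_C_mul, Polynomial.coeff_X_pow, if_neg, mul_zero]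
          intro hc
          exact hj (Fin.ext hc.symm)
        · intro h; exact absurd (Finset.mem_univ _) h
      · rw [dif_neg hk]
        apply Finset.sum_eq_zero
        intro j _
        rw [Polynomial.coeff_C_mul, Polynomial.coeff_X_pow, if_neg, mul_zero]
        omega
    have hV0 : V ≠ 0 := by
      obtain ⟨j, hj⟩ := Function.ne_iff.mp hv0
      intro h
      apply hj
      have := hVcoeff j
      rw [h, Polynomial.coeff_zero, dif_pos j.isLt] at this
      simpa using this.symm
    have hVdeg : V.degree < (dp : ℕ) := by
      rw [Polynomial.degree_lt_iff_coeff_zero]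
      intro k hk
      rw [hVcoeff, dif_neg]
      exact fun h => absurd hk (by omega)
    -- (qb * V) %ₘ pb = 0
    have hsplit : qb * V = ∑ j : Fin dp, Polynomial.C (v j) * (qb * Polynomial.X ^ (j : ℕ)) := by
      rw [hV, Finset.mul_sum]
      apply Finset.sum_congr rfl
      intro j _
      ring
    have hmod : ∀ j : Fin dp, (qb * Polynomial.X ^ (j : ℕ)) %ₘ pb
        = (((q' * Polynomial.X ^ (j : ℕ)) %ₘ p₀).map φ) := by
      intro j
      rw [Polynomial.map_modByMonic _ hp₀monic, Polynomial.map_mul, Polynomial.map_pow,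
        Polynomial.map_X, hqb]
    have hW : (qb * V) %ₘ pb = 0 := by
      rw [hsplit, sum_modByMonic]
      apply Polynomial.ext
      intro k
      rw [Polynomial.finset_sum_coeff, Polynomial.coeff_zero]
      by_cases hk : k < dp
      · have := congrFun hveq ⟨k, hk⟩
        rw [Matrix.mulVec, dotProduct] at this
        simp only [Matrix.map_apply, Pi.zero_apply] at this
        rw [← this]
        apply Finset.sum_congr rfl
        intro j _
        rw [C_mul_modByMonic, Polynomial.coeff_C_mul, hmod j, Polynomial.coeff_map]
        rw [hM]
        ring
      · apply Finset.sum_eq_zero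
        intro j _
        rw [C_mul_modByMonic, Polynomial.coeff_C_mul]
        have hdeg : ((qb * Polynomial.X ^ (j : ℕ)) %ₘ pb).degree < (k : ℕ) := by
          apply lt_of_lt_of_le (Polynomial.degree_modByMonic_lt _ hpbmonic)
          rw [Polynomial.degree_eq_natDegree hpb0, hpbdeg]
          exact_mod_cast Nat.le_of_not_lt hk
        rw [Polynomial.coeff_eq_zero_of_degree_lt hdeg, mul_zero]
    have hdvd : pb ∣ qb * V := (Polynomial.modByMonic_eq_zero_iff_dvd hpbmonic).mp hW
    -- gcd argument
    set D := EuclideanDomain.gcd pb qb with hD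
    by_cases hu : IsUnit D
    · exfalso
      have hcop : IsCoprime pb qb := EuclideanDomain.gcd_isUnit_iff.mp hu
      have hdvdV : pb ∣ V := hcop.dvd_of_dvd_mul_left hdvd
      have := Polynomial.degree_le_of_dvd hdvdV hV0
      rw [Polynomial.degree_eq_natDegree hpb0, hpbdeg] at this
      exact absurd (lt_of_le_of_lt this hVdeg) (lt_irrefl _)
    · have hD0 : D ≠ 0 := by
        intro h
        rw [hD, EuclideanDomain.gcd_eq_zero_iff] at h
        exact hpb0 h.1
      have hDdeg : D.degree ≠ 0 := by
        intro h
        exact hu (Polynomial.isUnit_iff_degree_eq_zero.mpr h)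
      obtain ⟨r, hr⟩ := IsAlgClosed.exists_root D hDdeg
      have hrp : Polynomial.eval r pb = 0 := by
        obtain ⟨k, hk⟩ := EuclideanDomain.gcd_dvd_left pb qb
        rw [hk, Polynomial.eval_mul, hr, zero_mul]
      have hrq : Polynomial.eval r qb = 0 := by
        obtain ⟨k, hk⟩ := EuclideanDomain.gcd_dvd_right pb qb
        rw [hk, Polynomial.eval_mul, hr, zero_mul]
      refine ⟨r, ?_, hrq⟩
      rw [← hp'back, Polynomial.map_mul, Polynomial.eval_mul, hrp, mul_zero]
  -- Claim B : N vanishes at the origin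
  have claimB : eval (0 : Fin 2 → ℂ) N = 0 := by
    set φ := (eval (0 : Fin 2 → ℂ) : MvPolynomial (Fin 2) ℂ →+* ℂ) with hφ
    have hpbX : p₀.map φ = Polynomial.X ^ dp := by
      apply Polynomial.ext
      intro k
      rw [Polynomial.coeff_map, hp₀coeff, map_mul, Polynomial.coeff_X_pow]
      have hφC : φ (C cP⁻¹) = cP⁻¹ := eval_C _
      by_cases hk : k = dp
      · subst hk
        rw [hPtop, hφC]
        have : φ (C cP) = cP := eval_C _
        rw [this, inv_mul_cancel₀ haP, if_pos rfl]
      · rw [if_neg hk, hφC, hPzero k hk, mul_zero]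
    have hqbX : q'.map φ = Polynomial.C cQ * Polynomial.X ^ dq := by
      apply Polynomial.ext
      intro k
      rw [Polynomial.coeff_map, Polynomial.coeff_C_mul, Polynomial.coeff_X_pow]
      by_cases hk : k = dq
      · subst hk
        rw [hQtop]
        have : φ (C cQ) = cQ := eval_C _
        rw [this, if_pos rfl, mul_one]
      · rw [hQzero k hk, if_neg hk, mul_zero]
    have hrow : ∀ j : Fin dp, (M.map φ) ⟨0, Nat.pos_of_ne_zero hdp⟩ j = 0 := by
      intro j
      rw [Matrix.map_apply, hM]
      show φ (((q' * Polynomial.X ^ (j : ℕ)) %ₘ p₀).coeff 0) = 0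
      rw [← Polynomial.coeff_map, Polynomial.map_modByMonic _ hp₀monic, Polynomial.map_mul,
        Polynomial.map_pow, Polynomial.map_X, hqbX, hpbX, mul_assoc, ← pow_add]
      by_cases hlt : dq + (j : ℕ) < dp
      · rw [Polynomial.modByMonic_eq_self_iff (Polynomial.monic_X_pow dp) |>.mpr]
        · rw [Polynomial.coeff_C_mul, Polynomial.coeff_X_pow, if_neg, mul_zero]
          omega
        · have hle : (Polynomial.C cQ * Polynomial.X ^ (dq + (j : ℕ))
              : Polynomial ℂ).degree ≤ ((dq + (j : ℕ) : ℕ) : WithBot ℕ) := by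
            rw [Polynomial.C_mul_X_pow_eq_monomial]
            exact Polynomial.degree_monomial_le _ _
          apply lt_of_le_of_lt hle
          rw [Polynomial.degree_X_pow]
          exact_mod_cast hlt
      · have hdvd : Polynomial.X ^ dp ∣ Polynomial.C cQ * Polynomial.X ^ (dq + (j : ℕ)) :=
          Dvd.dvd.mul_left (pow_dvd_pow _ (Nat.le_of_not_lt hlt)) _
        rw [(Polynomial.modByMonic_eq_zero_iff_dvd (Polynomial.monic_X_pow dp)).mpr hdvd,
          Polynomial.coeff_zero]
    have hdet : (M.map φ).det = 0 :=
      Matrix.det_eq_zero_of_row_eq_zero _ hrow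
    show φ M.det = 0
    rw [RingHom.map_det, RingHom.mapMatrix_apply]
    exact hdet
  -- combine
  obtain ⟨β, hβ0, hβ⟩ := exists_nonzero_root_two_vars claimB
  obtain ⟨r, hrp, hrq⟩ := claimA β hβ
  set pt : Fin 3 → ℂ := Fin.cons r β with hptdef
  have hpt0 : pt ≠ 0 := by
    intro h
    apply hβ0
    funext j
    have := congrFun h j.succ
    rwa [hptdef, Fin.cons_succ] at this
  have hPtzero : eval pt Pt = 0 := by
    rw [hptdef, eval_eq_eval_mv_eval', ← hp']
    exact hrp
  have hQtzero : eval pt Qt = 0 := by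
    rw [hptdef, eval_eq_eval_mv_eval', ← hq']
    exact hrq
  -- pull back through the change of variables
  set y : Fin 3 → ℂ := fun i => eval pt (g i) with hydef
  have hyP : eval y P = 0 := by
    rw [hydef, ← eval_aeval', ← hPt]
    exact hPtzero
  have hyQ : eval y Q = 0 := by
    rw [hydef, ← eval_aeval', ← hQt]
    exact hQtzero
  refine ⟨y, ?_, hyP, hyQ⟩
  intro h
  apply hpt0
  have hy0 : y 0 = a 0 * pt 0 := by
    simp only [hydef, hgdef]; simp
  have hpt00 : pt 0 = 0 := by
    have := congrFun h 0
    rw [hy0] at this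
    exact (mul_eq_zero.mp this).resolve_left ha0
  funext i
  by_cases hi : i = 0
  · subst hi; exact hpt00
  · have := congrFun h i
    simp only [hydef, hgdef] at this
    simp only [if_neg hi] at this
    rw [eval_add, eval_mul, eval_C, eval_X, eval_X, hpt00, mul_zero, add_zero] at this
    exact this

lemma pderiv_eq_zero_of_free {q : MvPolynomial (Fin 5) ℂ} {j : Fin 5}
    (hq : ∀ m ∈ q.support, m j = 0) : pderiv j q = 0 := by
  classical
  conv_lhs => rw [← support_sum_monomial_coeff q]
  rw [map_sum]
  apply Finset.sum_eq_zero
  intro m hm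
  rw [pderiv_monomial, hq m hm]
  simp

lemma support_pderiv_free {q : MvPolynomial (Fin 5) ℂ} {i j : Fin 5}
    (hq : ∀ m ∈ q.support, m j = 0) :
    ∀ m ∈ (pderiv i q).support, m j = 0 := by
  classical
  intro m hm
  conv at hm => rw [← support_sum_monomial_coeff q]
  rw [map_sum] at hm
  obtain ⟨m', hm', hmm⟩ := Finset.mem_biUnion.mp (MvPolynomial.support_sum hm)
  rw [pderiv_monomial, support_monomial] at hmm
  by_cases hz : coeff m' q * m' i = 0
  · rw [if_pos hz] at hmm
    exact absurd hmm (Finset.notMem_empty m)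
  · rw [if_neg hz] at hmm
    have hme : m = m' - Finsupp.single i 1 := Finset.mem_singleton.mp hmm
    rw [hme, Finsupp.tsub_apply, hq m' hm']
    simp

lemma eval_update_free {q : MvPolynomial (Fin 5) ℂ} {j : Fin 5}
    (hq : ∀ m ∈ q.support, m j = 0) (x : Fin 5 → ℂ) (c : ℂ) :
    eval (Function.update x j c) q = eval x q := by
  rw [eval_eq, eval_eq]
  apply Finset.sum_congr rfl
  intro m hm
  congr 1
  apply Finset.prod_congr rfl
  intro i hi
  have hij : i ≠ j := by
    intro h
    subst h
    exact (Finsupp.mem_support_iff.mp hi) (hq m hm)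
  rw [Function.update_of_ne hij]

lemma qi_no_critical_point
    (G H : MvPolynomial (Fin 5) ℂ)
    (hGsupp : ∀ m ∈ G.support, m 4 = 0)
    (hHsupp : ∀ m ∈ H.support, m 3 = 0 ∧ m 4 = 0)
    (F : MvPolynomial (Fin 5) ℂ)
    (hF : F = X 3 * X 4 ^ 2 + X 3 * G + H)
    (hqs : ∀ p : Fin 5 → ℂ, (∀ i : Fin 5, eval p (pderiv i F) = 0) → p = 0)
    (x : Fin 5 → ℂ) (hx3 : x 3 = 0) (hx4 : x 4 = 0)
    (hdH : ∀ i : Fin 5, eval x (pderiv i H) = 0) : x = 0 := by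
  classical
  obtain ⟨c, hc⟩ := IsAlgClosed.exists_pow_nat_eq (k := ℂ) (-(eval x G)) (n := 2) (by norm_num)
  set p : Fin 5 → ℂ := Function.update x 4 c with hp
  have hp3 : p 3 = 0 := by
    rw [hp, Function.update_of_ne (by decide)]
    exact hx3
  have hpG : eval p G = eval x G := eval_update_free hGsupp x c
  have hH4 : ∀ m ∈ H.support, m 4 = 0 := fun m hm => (hHsupp m hm).2
  have hsum : c ^ 2 + eval p G = 0 := by
    rw [hpG, hc]
    ring
  have hpzero : ∀ i : Fin 5, eval p (pderiv i F) = 0 := by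
    intro i
    have hFr : F = X 3 * (X 4 ^ 2 + G) + H := by
      rw [hF]; ring
    rw [hFr, map_add, map_add, pderiv_mul, map_add, map_mul, map_mul]
    have h1 : eval p (X 3) = 0 := by
      rw [eval_X]; exact hp3
    have h2 : eval p (X 4 ^ 2 + G) = c ^ 2 + eval p G := by
      rw [map_add, map_pow, eval_X, hp, Function.update_self]
    have h3 : eval p (pderiv i H) = 0 := by
      have := eval_update_free (support_pderiv_free (i := i) hH4) x c
      rw [← hp] at this
      rw [this]
      exact hdH i
    rw [h1, h2, hsum, h3]
    ring
  have hp0 := hqs p hpzero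
  funext i
  by_cases hi : i = 4
  · subst hi; exact hx4
  · have : p i = 0 := by rw [hp0]; rfl
    rwa [hp, Function.update_of_ne hi] at this

end QIAux

/-- Quadratic involution setting (Lemma 4.2 of the paper): if
`F = x₃x₄² + x₃·G + H` is quasi-smooth, where `G ∈ ℂ[x₀,x₁,x₂,x₃]` is weighted
homogeneous of degree `2w₄` and `H ∈ ℂ[x₀,x₁,x₂]` is weighted homogeneous of
degree `d = w₃ + 2w₄`, then `H` is irreducible. -/
theorem quadratic_involution_H_irreducible
    (w : Fin 5 → ℕ) (hw : ∀ i, 0 < w i) (hw0 : w 0 = 1)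
    (G H : MvPolynomial (Fin 5) ℂ)
    (hGsupp : ∀ m ∈ G.support, m 4 = 0)
    (hHsupp : ∀ m ∈ H.support, m 3 = 0 ∧ m 4 = 0)
    (hGhom : IsWeightedHomogeneous w G (2 * w 4))
    (hHhom : IsWeightedHomogeneous w H (w 3 + 2 * w 4))
    (F : MvPolynomial (Fin 5) ℂ)
    (hF : F = X 3 * X 4 ^ 2 + X 3 * G + H)
    (hqs : ∀ p : Fin 5 → ℂ, (∀ i : Fin 5, eval p (pderiv i F) = 0) → p = 0) :
    Irreducible H := by
  classical
  have hd_pos : w 3 + 2 * w 4 ≠ 0 := by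
    have := hw 3
    omega
  constructor
  · -- H is not a unit
    intro hu
    have h0 : constantCoeff H ≠ 0 := (hu.map constantCoeff).ne_zero
    rw [constantCoeff_eq] at h0
    have hwt := hHhom (show coeff 0 H ≠ 0 from h0)
    rw [map_zero] at hwt
    exact hd_pos hwt.symm
  · intro A B hab
    by_contra hcon
    push_neg at hcon
    obtain ⟨huA, huB⟩ := hcon
    -- H cannot vanish identically
    have hH0 : H ≠ 0 := by
      intro h
      have hx := qi_no_critical_point G H hGsupp hHsupp F hF hqs
        (fun i => if i = 0 then 1 else 0)
        (by rw [if_neg (by decide)]) (by rw [if_neg (by decide)])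
        (by intro i; rw [h, map_zero, map_zero])
      have := congrFun hx 0
      simp at this
    have hA0 : A ≠ 0 := by
      intro h
      apply hH0
      rw [hab, h, zero_mul]
    have hB0 : B ≠ 0 := by
      intro h
      apply hH0
      rw [hab, h, mul_zero]
    -- supports of the factors avoid the variables 3 and 4
    have hsuppfree : ∀ j : Fin 5, (∀ m ∈ H.support, m j = 0) →
        (∀ m ∈ A.support, m j = 0) ∧ (∀ m ∈ B.support, m j = 0) := by
      intro j hj
      have hHu : IsWeightedHomogeneous (fun i => if i = j then 1 else 0) (A * B) 0 := by
        intro m hm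
        rw [weight_indicator]
        rw [hab] at hj
        exact hj m (mem_support_iff.mpr hm)
      obtain ⟨dA, dB, hsum, hA, hB⟩ := isWeightedHomogeneous_of_mul _ hA0 hB0 hHu
      have hdA : dA = 0 := by omega
      have hdB : dB = 0 := by omega
      constructor
      · intro m hm
        have := hA (mem_support_iff.mp hm)
        rwa [weight_indicator, hdA] at this
      · intro m hm
        have := hB (mem_support_iff.mp hm)
        rwa [weight_indicator, hdB] at this
    obtain ⟨hA3, hB3⟩ := hsuppfree 3 (fun m hm => (hHsupp m hm).1)
    obtain ⟨hA4, hB4⟩ := hsuppfree 4 (fun m hm => (hHsupp m hm).2)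
    -- weighted degrees of the factors
    rw [hab] at hHhom
    obtain ⟨d1, d2, hd12, hAh, hBh⟩ := isWeightedHomogeneous_of_mul w hA0 hB0 hHhom
    have hd1 : d1 ≠ 0 := by
      intro h
      subst h
      have hAC := eq_C_of_isWeightedHomogeneous_zero hw hAh
      have hc0 : coeff 0 A ≠ 0 := by
        intro h
        rw [h, map_zero] at hAC
        exact hA0 hAC
      apply huA
      rw [hAC]
      exact (isUnit_iff_ne_zero.mpr hc0).map (C : ℂ →+* MvPolynomial (Fin 5) ℂ)
    have hd2 : d2 ≠ 0 := by
      intro h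
      subst h
      have hBC := eq_C_of_isWeightedHomogeneous_zero hw hBh
      have hc0 : coeff 0 B ≠ 0 := by
        intro h
        rw [h, map_zero] at hBC
        exact hB0 hBC
      apply huB
      rw [hBC]
      exact (isUnit_iff_ne_zero.mpr hc0).map (C : ℂ →+* MvPolynomial (Fin 5) ℂ)
    -- the power substitution into three variables
    set g5 : Fin 5 → MvPolynomial (Fin 3) ℂ :=
      fun i => if h : (i : ℕ) < 3 then X (⟨(i : ℕ), h⟩ : Fin 3) ^ w i else 0 with hg5
    set e : Fin 5 → ℕ := fun i => if (i : ℕ) < 3 then w i else 0 with he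
    have hg5h : ∀ i, (g5 i).IsHomogeneous (e i) := by
      intro i
      by_cases h : (i : ℕ) < 3
      · simp only [hg5, he, dif_pos h, if_pos h]
        simpa using (isHomogeneous_X ℂ (⟨(i : ℕ), h⟩ : Fin 3)).pow (w i)
      · simp only [hg5, he, dif_neg h, if_neg h]
        exact isHomogeneous_zero _ _ _
    have hweq : ∀ m : Fin 5 →₀ ℕ, m 3 = 0 → m 4 = 0 →
        Finsupp.weight e m = Finsupp.weight w m := by
      intro m h3 h4
      rw [Finsupp.weight_apply, Finsupp.weight_apply]
      apply Finset.sum_congr rfl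
      intro i hi
      have hi3 : i ≠ 3 := fun h => (Finsupp.mem_support_iff.mp hi) (h ▸ h3)
      have hi4 : i ≠ 4 := fun h => (Finsupp.mem_support_iff.mp hi) (h ▸ h4)
      have hlt : (i : ℕ) < 3 := by
        have hl := i.isLt
        have h3' : (i : ℕ) ≠ 3 := fun h => hi3 (Fin.ext h)
        have h4' : (i : ℕ) ≠ 4 := fun h => hi4 (Fin.ext h)
        omega
      simp [he, hlt]
    have hPA : (aeval g5 A).IsHomogeneous d1 := by
      apply aeval_isHomogeneous_of g5 e hg5h
      intro m hm
      rw [hweq m (hA3 m hm) (hA4 m hm)]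
      exact hAh (mem_support_iff.mp hm)
    have hPB : (aeval g5 B).IsHomogeneous d2 := by
      apply aeval_isHomogeneous_of g5 e hg5h
      intro m hm
      rw [hweq m (hB3 m hm) (hB4 m hm)]
      exact hBh (mem_support_iff.mp hm)
    -- the substituted polynomials are nonzero
    obtain ⟨x5, hx5⟩ := mv_exists_eval_ne_zero (mul_ne_zero hA0 hB0)
    rw [map_mul, mul_ne_zero_iff] at hx5
    set x5' : Fin 5 → ℂ := Function.update (Function.update x5 3 0) 4 0 with hx5'
    have hevalA : eval x5' A = eval x5 A := by
      rw [hx5', eval_update_free hA4, eval_update_free hA3]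
    have hevalB : eval x5' B = eval x5 B := by
      rw [hx5', eval_update_free hB4, eval_update_free hB3]
    have hroot : ∀ j : Fin 3, ∃ z : ℂ,
        z ^ w (Fin.castLE (by omega) j) = x5' (Fin.castLE (by omega) j) :=
      fun j => IsAlgClosed.exists_pow_nat_eq _ (hw _)
    choose y hy using hroot
    have hg5eval : (fun i => eval y (g5 i)) = x5' := by
      funext i
      by_cases h : (i : ℕ) < 3
      · simp only [hg5, dif_pos h]
        rw [map_pow, eval_X]
        have hcast : Fin.castLE (by omega : 3 ≤ 5) (⟨(i : ℕ), h⟩ : Fin 3) = i := Fin.ext rfl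
        have := hy ⟨(i : ℕ), h⟩
        rwa [hcast] at this
      · simp only [hg5, dif_neg h, map_zero]
        have hior : i = 3 ∨ i = 4 := by
          have hl := i.isLt
          have : (i : ℕ) = 3 ∨ (i : ℕ) = 4 := by omega
          rcases this with h' | h'
          · exact Or.inl (Fin.ext h')
          · exact Or.inr (Fin.ext h')
        rcases hior with rfl | rfl
        · rw [hx5', Function.update_of_ne (by decide), Function.update_self]
        · rw [hx5', Function.update_self]
    have hPA0 : aeval g5 A ≠ 0 := by
      intro hz
      apply hx5.1
      rw [← hevalA, ← hg5eval, ← eval_aeval', hz, map_zero]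
    have hPB0 : aeval g5 B ≠ 0 := by
      intro hz
      apply hx5.2
      rw [← hevalB, ← hg5eval, ← eval_aeval', hz, map_zero]
    -- common zero of the substituted polynomials
    obtain ⟨y', hy'0, hy'A, hy'B⟩ :=
      exists_common_root_of_isHomogeneous hPA hPB hPA0 hPB0 hd1 hd2
    set x : Fin 5 → ℂ := fun i => eval y' (g5 i) with hx
    have hxA : eval x A = 0 := by
      rw [hx, ← eval_aeval']
      exact hy'A
    have hxB : eval x B = 0 := by
      rw [hx, ← eval_aeval']
      exact hy'B
    have hx3 : x 3 = 0 := by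
      simp only [hx, hg5]
      rw [dif_neg (by decide), map_zero]
    have hx4 : x 4 = 0 := by
      simp only [hx, hg5]
      rw [dif_neg (by decide), map_zero]
    have hdH : ∀ i : Fin 5, eval x (pderiv i H) = 0 := by
      intro i
      rw [hab, pderiv_mul, map_add, map_mul, map_mul, hxA, hxB]
      ring
    have hxzero := qi_no_critical_point G H hGsupp hHsupp F hF hqs x hx3 hx4 hdH
    obtain ⟨j, hj⟩ := Function.ne_iff.mp hy'0
    have hxj : x (Fin.castLE (by omega) j) ≠ 0 := by
      have hjlt : ((Fin.castLE (by omega : 3 ≤ 5) j : Fin 5) : ℕ) < 3 := j.isLt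
      simp only [hx, hg5, dif_pos hjlt]
      rw [map_pow, eval_X]
      have hcast : (⟨((Fin.castLE (by omega : 3 ≤ 5) j : Fin 5) : ℕ), hjlt⟩ : Fin 3) = j :=
        Fin.ext rfl
      rw [hcast]
      exact pow_ne_zero _ hj
    rw [hxzero] at hxj
    exact hxj rfl
end

section
/- Let R be a commutative ring and let z, t, w, a, b, c, d ∈ R. Define F = z·w² + a·w − t·z³ − b·z² − c·z + d, u = w² − t·z² − b·z − c, and v = u·w + a·z·t + a·b. Then v² − a·b·v − (u³ + c·u² − (b·d + a²·t)·u + (d² − a²·c)·t) lies in the principal ideal of R generated by F. -/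
/-- The Weierstrass-form identity behind the elliptic involution of the paper
(families No. 20 and 36): with `F = zw² + aw − tz³ − bz² − cz + d`,
`u = w² − tz² − bz − c` and `v = uw + azt + ab`, the element
`v² − abv − (u³ + cu² − (bd + a²t)u + (d² − a²c)t)` lies in the ideal `(F)`. -/
theorem elliptic_involution_weierstrass_identity
    {R : Type*} [CommRing R] (z t w a b c d : R) (F u v : R)
    (hF : F = z * w ^ 2 + a * w - t * z ^ 3 - b * z ^ 2 - c * z + d)
    (hu : u = w ^ 2 - t * z ^ 2 - b * z - c)
    (hv : v = u * w + a * z * t + a * b) :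
    v ^ 2 - a * b * v -
        (u ^ 3 + c * u ^ 2 - (b * d + a ^ 2 * t) * u + (d ^ 2 - a ^ 2 * c) * t) ∈
      Ideal.span {F} := by
  rw [Ideal.mem_span_singleton]
  refine ⟨t * z * w ^ 2 + b * w ^ 2 + a * t * w - t ^ 2 * z ^ 3 - 2 * b * t * z ^ 2
    - (b ^ 2 + t * c) * z - b * c - t * d, ?_⟩
  subst hF hu hv
  ring
end

section
/- Let g₂, g₄, h₃, h₅, h₇ ∈ ℂ[x,y,z] be homogeneous polynomials (in the standard grading) of degrees 2, 4, 3, 5, 7 respectively, and define F = y·w² + w·(t·g₂ + g₄) + y·t³ + t²·h₃ + t·h₅ + h₇ ∈ ℂ[x,y,z,t,w] (a weighted homogeneous polynomial of degree 7 for the weights (1,1,1,2,3)). Then for every (t₀, w₀) ∈ ℂ² with w₀² + t₀³ = 0, all five partial derivatives of F vanish at the point (0,0,0,t₀,w₀); in particular they vanish at (0,0,0,−1,1) ≠ 0, so F is not quasi-smooth. -/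
open MvPolynomial

lemma aux_eval (p : MvPolynomial (Fin 5) ℂ)
    (hs : ∀ m ∈ p.support, m 3 = 0 ∧ m 4 = 0)
    {n : ℕ} (hp : p.IsHomogeneous n) (hn : 1 ≤ n) (t w : ℂ) :
    eval ![0, 0, 0, t, w] p = 0 := by
  rw [eval_eq]
  apply Finset.sum_eq_zero
  intro m hm
  obtain ⟨h3, h4⟩ := hs m hm
  have hdeg : m 0 + m 1 + m 2 + m 3 + m 4 = n := by
    have := hp (mem_support_iff.mp hm)
    rw [← this]
    simp [Finsupp.weight_apply, Finsupp.sum_fintype, Fin.sum_univ_five]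
  have h012 : m 0 ≠ 0 ∨ m 1 ≠ 0 ∨ m 2 ≠ 0 := by omega
  rcases h012 with h | h | h
  · rw [Finset.prod_eq_zero (Finsupp.mem_support_iff.mpr h)]
    · ring
    · simp [zero_pow h]
  · rw [Finset.prod_eq_zero (Finsupp.mem_support_iff.mpr h)]
    · ring
    · simp [zero_pow h]
  · rw [Finset.prod_eq_zero (Finsupp.mem_support_iff.mpr h)]
    · ring
    · simp [zero_pow h]

lemma aux_pderiv (p : MvPolynomial (Fin 5) ℂ)
    (hs : ∀ m ∈ p.support, m 3 = 0 ∧ m 4 = 0)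
    {n : ℕ} (hp : p.IsHomogeneous n) (hn : 2 ≤ n) (i : Fin 5) (t w : ℂ) :
    eval ![0, 0, 0, t, w] (pderiv i p) = 0 := by
  conv_lhs => rw [p.as_sum, map_sum, map_sum]
  apply Finset.sum_eq_zero
  intro m hm
  rw [pderiv_monomial, eval_monomial]
  by_cases hmi : m i = 0
  · simp [hmi]
  · obtain ⟨h3, h4⟩ := hs m hm
    have hdeg : m 0 + m 1 + m 2 + m 3 + m 4 = n := by
      have := hp (mem_support_iff.mp hm)
      rw [← this]
      simp [Finsupp.weight_apply, Finsupp.sum_fintype, Fin.sum_univ_five]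
    set s := m - Finsupp.single i 1 with hsdef
    have es : ∀ j : Fin 5, s j = m j - (Finsupp.single i 1 : Fin 5 →₀ ℕ) j := by
      intro j; simp [hsdef, Finsupp.tsub_apply]
    have hb : (Finsupp.single i 1 : Fin 5 →₀ ℕ) 0 + (Finsupp.single i 1 : Fin 5 →₀ ℕ) 1
        + (Finsupp.single i 1 : Fin 5 →₀ ℕ) 2 ≤ 1 := by
      fin_cases i <;> simp [Finsupp.single_apply]
    have h012 : s 0 ≠ 0 ∨ s 1 ≠ 0 ∨ s 2 ≠ 0 := by
      have e0 := es 0; have e1 := es 1; have e2 := es 2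
      omega
    rw [Finsupp.prod]
    rcases h012 with h | h | h
    · rw [Finset.prod_eq_zero (Finsupp.mem_support_iff.mpr h)]
      · ring
      · simp [zero_pow h]
    · rw [Finset.prod_eq_zero (Finsupp.mem_support_iff.mpr h)]
      · ring
      · simp [zero_pow h]
    · rw [Finset.prod_eq_zero (Finsupp.mem_support_iff.mpr h)]
      · ring
      · simp [zero_pow h]


set_option linter.unnecessarySeqFocus false in
/-- Family No. 5 (X₇ ⊂ ℙ(1,1,1,2,3)): a hypersurface of the form
`yw² + w(tg₂ + g₄) + yt³ + t²h₃ + th₅ + h₇`, with `g₂,g₄,h₃,h₅,h₇` homogeneous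
polynomials in `x,y,z` of the indicated degrees, has all five partial derivatives
vanishing at every point `(0,0,0,t₀,w₀)` with `w₀² + t₀³ = 0`; in particular at
`(0,0,0,−1,1) ≠ 0`, so it is not quasi-smooth. -/
theorem family5_equal_w2_t3_coefficients_not_quasismooth
    (g2 g4 h3 h5 h7 : MvPolynomial (Fin 5) ℂ)
    (hg2supp : ∀ m ∈ g2.support, m 3 = 0 ∧ m 4 = 0)
    (hg4supp : ∀ m ∈ g4.support, m 3 = 0 ∧ m 4 = 0)
    (hh3supp : ∀ m ∈ h3.support, m 3 = 0 ∧ m 4 = 0)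
    (hh5supp : ∀ m ∈ h5.support, m 3 = 0 ∧ m 4 = 0)
    (hh7supp : ∀ m ∈ h7.support, m 3 = 0 ∧ m 4 = 0)
    (hg2 : g2.IsHomogeneous 2) (hg4 : g4.IsHomogeneous 4)
    (hh3 : h3.IsHomogeneous 3) (hh5 : h5.IsHomogeneous 5) (hh7 : h7.IsHomogeneous 7)
    (F : MvPolynomial (Fin 5) ℂ)
    (hF : F = X 1 * X 4 ^ 2 + X 4 * (X 3 * g2 + g4) + X 1 * X 3 ^ 3 +
        X 3 ^ 2 * h3 + X 3 * h5 + h7) :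
    (∀ t0 w0 : ℂ, w0 ^ 2 + t0 ^ 3 = 0 →
        ∀ i : Fin 5, eval ![0, 0, 0, t0, w0] (pderiv i F) = 0) ∧
      (∀ i : Fin 5, eval ![0, 0, 0, -1, 1] (pderiv i F) = 0) ∧
      (![0, 0, 0, -1, 1] : Fin 5 → ℂ) ≠ 0 ∧
      ¬(∀ p : Fin 5 → ℂ, (∀ i : Fin 5, eval p (pderiv i F) = 0) → p = 0) := by
  have E2 := aux_eval g2 hg2supp hg2 (by norm_num)
  have E4 := aux_eval g4 hg4supp hg4 (by norm_num)
  have E3 := aux_eval h3 hh3supp hh3 (by norm_num)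
  have E5 := aux_eval h5 hh5supp hh5 (by norm_num)
  have E7 := aux_eval h7 hh7supp hh7 (by norm_num)
  have D2 := aux_pderiv g2 hg2supp hg2 (by norm_num)
  have D4 := aux_pderiv g4 hg4supp hg4 (by norm_num)
  have D3 := aux_pderiv h3 hh3supp hh3 (by norm_num)
  have D5 := aux_pderiv h5 hh5supp hh5 (by norm_num)
  have D7 := aux_pderiv h7 hh7supp hh7 (by norm_num)
  subst hF
  have main : ∀ t0 w0 : ℂ, w0 ^ 2 + t0 ^ 3 = 0 →
      ∀ i : Fin 5, eval ![0, 0, 0, t0, w0] (pderiv i (X 1 * X 4 ^ 2 + X 4 * (X 3 * g2 + g4)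
        + X 1 * X 3 ^ 3 + X 3 ^ 2 * h3 + X 3 * h5 + h7)) = 0 := by
    intro t0 w0 hw i
    fin_cases i <;>
      simp [pderiv_mul, pderiv_pow, pderiv_X, E2, E4, E3, E5, E7, D2, D4, D3, D5, D7,
        Pi.single_apply] <;>
      linear_combination hw
  refine ⟨main, main (-1) 1 (by norm_num), ?_, ?_⟩
  · intro h
    simpa using congrFun h 4
  · intro h
    have := h _ (main (-1) 1 (by norm_num))
    simpa using congrFun this 4
end

section
/- Let f₂ ∈ ℂ[x,y] be weighted homogeneous of degree 2 (weights 1,1), let f₄, f₆, f₈ ∈ ℂ[x,y,z] be weighted homogeneous of degrees 4, 6, 8 (weights 1,1,2), and let f₅ ∈ ℂ[x,y,z,t] be weighted homogeneous of degree 5 (weights 1,1,2,2) whose coefficients of the monomials x·t² and y·t² are both zero. Define F = (z + f₂)·w² + w·f₅ − z·t³ − t²·f₄ − t·f₆ + f₈ ∈ ℂ[x,y,z,t,w]. Then all five partial derivatives of F vanish at the point (0,0,0,1,1) ∈ ℂ⁵; in particular F is not quasi-smooth. -/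
open MvPolynomial

private lemma wt5 (m : Fin 5 →₀ ℕ) :
    Finsupp.weight (![1,1,2,2,3] : Fin 5 → ℕ) m
      = m 0 + m 1 + 2*m 2 + 2*m 3 + 3*m 4 := by
  rw [Finsupp.weight_apply, Finsupp.sum_fintype]
  · simp [Fin.sum_univ_five]; ring
  · intro i; simp

private lemma prodZero (u : Fin 5 →₀ ℕ) (j : Fin 5) (hj : j = 0 ∨ j = 1 ∨ j = 2)
    (h : u j ≠ 0) :
    (∏ k ∈ u.support, (![0,0,0,1,1] : Fin 5 → ℂ) k ^ u k) = 0 := by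
  apply Finset.prod_eq_zero (i := j) (Finsupp.mem_support_iff.2 h)
  have hpj : (![0,0,0,1,1] : Fin 5 → ℂ) j = 0 := by
    rcases hj with rfl | rfl | rfl <;> simp
  rw [hpj, zero_pow h]

private lemma evalZero (g : MvPolynomial (Fin 5) ℂ)
    (h : ∀ m ∈ g.support, m 0 ≠ 0 ∨ m 1 ≠ 0 ∨ m 2 ≠ 0) :
    eval ![0,0,0,1,1] g = 0 := by
  rw [eval_eq]
  apply Finset.sum_eq_zero
  intro m hm
  rcases h m hm with h' | h' | h'
  · rw [prodZero m 0 (by simp) h']; ring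
  · rw [prodZero m 1 (by simp) h']; ring
  · rw [prodZero m 2 (by simp) h']; ring

private lemma evalPderivZero (g : MvPolynomial (Fin 5) ℂ) (i : Fin 5)
    (h : ∀ m ∈ g.support, m i ≠ 0 → coeff m g = 0 ∨
      (m - Finsupp.single i 1 : Fin 5 →₀ ℕ) 0 ≠ 0 ∨ (m - Finsupp.single i 1 : Fin 5 →₀ ℕ) 1 ≠ 0 ∨
      (m - Finsupp.single i 1 : Fin 5 →₀ ℕ) 2 ≠ 0) :
    eval ![0,0,0,1,1] (pderiv i g) = 0 := by
  conv_lhs => rw [g.as_sum]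
  rw [map_sum, map_sum]
  apply Finset.sum_eq_zero
  intro m hm
  rw [pderiv_monomial, eval_monomial]
  by_cases hmi : m i = 0
  · simp [hmi]
  rcases h m hm hmi with h0 | h' | h' | h'
  · simp [h0]
  · rw [Finsupp.prod, prodZero _ 0 (by simp) h']; ring
  · rw [Finsupp.prod, prodZero _ 1 (by simp) h']; ring
  · rw [Finsupp.prod, prodZero _ 2 (by simp) h']; ring

set_option maxHeartbeats 1000000 in
/-- Family No. 7 (X₈ ⊂ ℙ(1,1,2,2,3)), Type II: in the equation
`(z + f₂)w² + wf₅ − zt³ − t²f₄ − tf₆ + f₈` the polynomial `f₅` must contain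
`xt²` or `yt²`; if both coefficients vanish, then all five partial derivatives
vanish at `(0,0,0,1,1)`, so the hypersurface is not quasi-smooth. -/
theorem family7_typeII_f5_must_contain_xt2_or_yt2
    (f2 f4 f5 f6 f8 : MvPolynomial (Fin 5) ℂ)
    (hf2supp : ∀ m ∈ f2.support, m 2 = 0 ∧ m 3 = 0 ∧ m 4 = 0)
    (hf4supp : ∀ m ∈ f4.support, m 3 = 0 ∧ m 4 = 0)
    (hf6supp : ∀ m ∈ f6.support, m 3 = 0 ∧ m 4 = 0)
    (hf8supp : ∀ m ∈ f8.support, m 3 = 0 ∧ m 4 = 0)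
    (hf5supp : ∀ m ∈ f5.support, m 4 = 0)
    (hf2 : IsWeightedHomogeneous (![1, 1, 2, 2, 3] : Fin 5 → ℕ) f2 2)
    (hf4 : IsWeightedHomogeneous (![1, 1, 2, 2, 3] : Fin 5 → ℕ) f4 4)
    (hf5 : IsWeightedHomogeneous (![1, 1, 2, 2, 3] : Fin 5 → ℕ) f5 5)
    (hf6 : IsWeightedHomogeneous (![1, 1, 2, 2, 3] : Fin 5 → ℕ) f6 6)
    (hf8 : IsWeightedHomogeneous (![1, 1, 2, 2, 3] : Fin 5 → ℕ) f8 8)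
    (hxt2 : coeff (Finsupp.single 0 1 + Finsupp.single 3 2) f5 = 0)
    (hyt2 : coeff (Finsupp.single 1 1 + Finsupp.single 3 2) f5 = 0)
    (F : MvPolynomial (Fin 5) ℂ)
    (hF : F = (X 2 + f2) * X 4 ^ 2 + X 4 * f5 - X 2 * X 3 ^ 3 -
        X 3 ^ 2 * f4 - X 3 * f6 + f8) :
    (∀ i : Fin 5, eval ![0, 0, 0, 1, 1] (pderiv i F) = 0) ∧
      ¬(∀ p : Fin 5 → ℂ, (∀ i : Fin 5, eval p (pderiv i F) = 0) → p = 0) := by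
  -- weight facts
  have w2 : ∀ m ∈ f2.support, m 0 + m 1 = 2 ∧ m 2 = 0 ∧ m 3 = 0 ∧ m 4 = 0 := by
    intro m hm
    obtain ⟨h2, h3, h4⟩ := hf2supp m hm
    have := hf2 (Finsupp.mem_support_iff.1 hm)
    rw [wt5] at this
    omega
  have w4 : ∀ m ∈ f4.support, m 0 + m 1 + 2*m 2 = 4 ∧ m 3 = 0 ∧ m 4 = 0 := by
    intro m hm
    obtain ⟨h3, h4⟩ := hf4supp m hm
    have := hf4 (Finsupp.mem_support_iff.1 hm)
    rw [wt5] at this; omega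
  have w6 : ∀ m ∈ f6.support, m 0 + m 1 + 2*m 2 = 6 ∧ m 3 = 0 ∧ m 4 = 0 := by
    intro m hm
    obtain ⟨h3, h4⟩ := hf6supp m hm
    have := hf6 (Finsupp.mem_support_iff.1 hm)
    rw [wt5] at this; omega
  have w8 : ∀ m ∈ f8.support, m 0 + m 1 + 2*m 2 = 8 ∧ m 3 = 0 ∧ m 4 = 0 := by
    intro m hm
    obtain ⟨h3, h4⟩ := hf8supp m hm
    have := hf8 (Finsupp.mem_support_iff.1 hm)
    rw [wt5] at this; omega
  have w5 : ∀ m ∈ f5.support, m 0 + m 1 + 2*m 2 + 2*m 3 = 5 ∧ m 4 = 0 := by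
    intro m hm
    have h4 := hf5supp m hm
    have := hf5 (Finsupp.mem_support_iff.1 hm)
    rw [wt5] at this; omega
  -- evaluation of the f's
  have e2 : eval ![0,0,0,1,1] f2 = 0 := by
    apply evalZero; intro m hm; have := w2 m hm; omega
  have e4 : eval ![0,0,0,1,1] f4 = 0 := by
    apply evalZero; intro m hm; have := w4 m hm; omega
  have e6 : eval ![0,0,0,1,1] f6 = 0 := by
    apply evalZero; intro m hm; have := w6 m hm; omega
  have e8 : eval ![0,0,0,1,1] f8 = 0 := by
    apply evalZero; intro m hm; have := w8 m hm; omega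
  have e5 : eval ![0,0,0,1,1] f5 = 0 := by
    apply evalZero; intro m hm; have := w5 m hm; omega
  -- pderivs of the f's
  have sub_apply : ∀ (m : Fin 5 →₀ ℕ) (i j : Fin 5),
      (m - Finsupp.single i 1 : Fin 5 →₀ ℕ) j = m j - (Finsupp.single i 1) j :=
    fun m i j => Finsupp.tsub_apply m _ j
  have hsingle : ∀ (i j : Fin 5), (Finsupp.single i 1 : Fin 5 →₀ ℕ) j
      = if i = j then 1 else 0 := fun i j => Finsupp.single_apply
  have d2 : ∀ i, eval ![0,0,0,1,1] (pderiv i f2) = 0 := by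
    intro i
    apply evalPderivZero
    intro m hm hmi
    right
    obtain ⟨hw, h2, h3, h4⟩ := w2 m hm
    rw [sub_apply, sub_apply, sub_apply, hsingle, hsingle, hsingle]
    fin_cases i <;> simp <;> omega
  have d4 : ∀ i, eval ![0,0,0,1,1] (pderiv i f4) = 0 := by
    intro i
    apply evalPderivZero
    intro m hm hmi
    right
    obtain ⟨hw, h3, h4⟩ := w4 m hm
    rw [sub_apply, sub_apply, sub_apply, hsingle, hsingle, hsingle]
    fin_cases i <;> simp <;> omega
  have d6 : ∀ i, eval ![0,0,0,1,1] (pderiv i f6) = 0 := by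
    intro i
    apply evalPderivZero
    intro m hm hmi
    right
    obtain ⟨hw, h3, h4⟩ := w6 m hm
    rw [sub_apply, sub_apply, sub_apply, hsingle, hsingle, hsingle]
    fin_cases i <;> simp <;> omega
  have d8 : ∀ i, eval ![0,0,0,1,1] (pderiv i f8) = 0 := by
    intro i
    apply evalPderivZero
    intro m hm hmi
    right
    obtain ⟨hw, h3, h4⟩ := w8 m hm
    rw [sub_apply, sub_apply, sub_apply, hsingle, hsingle, hsingle]
    fin_cases i <;> simp <;> omega
  have d5 : ∀ i, eval ![0,0,0,1,1] (pderiv i f5) = 0 := by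
    intro i
    apply evalPderivZero
    intro m hm hmi
    have hw := w5 m hm
    by_cases hq : (m - Finsupp.single i 1 : Fin 5 →₀ ℕ) 0 ≠ 0 ∨ (m - Finsupp.single i 1 : Fin 5 →₀ ℕ) 1 ≠ 0 ∨
        (m - Finsupp.single i 1 : Fin 5 →₀ ℕ) 2 ≠ 0
    · right; exact hq
    push_neg at hq
    obtain ⟨hq0, hq1, hq2⟩ := hq
    rw [sub_apply, hsingle] at hq0 hq1 hq2
    obtain ⟨hw5, hw4⟩ := hw
    left
    fin_cases i <;> simp at hq0 hq1 hq2 hmi ⊢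
    · -- i = 0 : m = x t^2
      have hm0 : m 0 = 1 := by omega
      have hm3 : m 3 = 2 := by omega
      have : m = Finsupp.single 0 1 + Finsupp.single 3 2 := by
        ext j
        fin_cases j <;> simp [Finsupp.single_apply] <;> omega
      rw [this]; exact hxt2
    · have hm1 : m 1 = 1 := by omega
      have hm3 : m 3 = 2 := by omega
      have : m = Finsupp.single 1 1 + Finsupp.single 3 2 := by
        ext j
        fin_cases j <;> simp [Finsupp.single_apply] <;> omega
      rw [this]; exact hyt2
    · omega
    · omega
    · omega
  -- main computation
  have main : ∀ i : Fin 5, eval ![0, 0, 0, 1, 1] (pderiv i F) = 0 := by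
    intro i
    subst hF
    fin_cases i <;>
      simp [pderiv_mul, pderiv_X, e2, e4, e5, e6, e8, d2, d4, d5, d6, d8,
        Pi.single_apply]
  refine ⟨main, fun h => ?_⟩
  have := congrFun (h ![0,0,0,1,1] main) 3
  simp at this
end
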